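/- arXiv:2107.01235 — 7 statements merged into one kernel-verified Lean document; each statement's English description precedes it below -/
import Mathlib

section
/- Let G be the 3×3 real matrix with rows (1,1,−1), (1,−1,1), (−1,1,1). For every vector u ∈ [0,1]³ and every sign b ∈ {−1,1}, there exists a vector z ∈ {0,1}³ such that (i) ‖G(u − z)‖_∞ ≤ 4/3, (ii) b · (u₁ + u₂ + u₃ − z₁ − z₂ − z₃) ≥ 0, and (iii) |u₁ + u₂ + u₃ − z₁ − z₂ − z₃| ≤ 2. -/
/-- The gadget matrix `G` with rows `(1,1,-1)`, `(1,-1,1)`, `(-1,1,1)`. -/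
noncomputable def Gmat : Matrix (Fin 3) (Fin 3) ℝ := !![1, 1, -1; 1, -1, 1; -1, 1, 1]

/-- Core arithmetic lemma for the sign `b = 1` case. -/
lemma gadget_core (u0 u1 u2 : ℝ) (h00 : 0 ≤ u0) (h01 : u0 ≤ 1)
    (h10 : 0 ≤ u1) (h11 : u1 ≤ 1) (h20 : 0 ≤ u2) (h21 : u2 ≤ 1) :
    ∃ z0 z1 z2 : ℝ, (z0 = 0 ∨ z0 = 1) ∧ (z1 = 0 ∨ z1 = 1) ∧ (z2 = 0 ∨ z2 = 1) ∧
      |(u0 - z0) + (u1 - z1) - (u2 - z2)| ≤ 4 / 3 ∧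
      |(u0 - z0) - (u1 - z1) + (u2 - z2)| ≤ 4 / 3 ∧
      |-(u0 - z0) + (u1 - z1) + (u2 - z2)| ≤ 4 / 3 ∧
      0 ≤ (u0 + u1 + u2) - (z0 + z1 + z2) ∧
      (u0 + u1 + u2) - (z0 + z1 + z2) ≤ 2 := by
  rcases le_or_gt (u0 + u1 + u2) (4/3) with hs | hs
  · exact ⟨0, 0, 0, Or.inl rfl, Or.inl rfl, Or.inl rfl,
      abs_le.2 ⟨by linarith, by linarith⟩, abs_le.2 ⟨by linarith, by linarith⟩,
      abs_le.2 ⟨by linarith, by linarith⟩, by linarith, by linarith⟩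
  rcases le_or_gt (-(1:ℝ)/3) (2*u0 - (u0+u1+u2)) with hw0 | hw0
  · exact ⟨1, 0, 0, Or.inr rfl, Or.inl rfl, Or.inl rfl,
      abs_le.2 ⟨by linarith, by linarith⟩, abs_le.2 ⟨by linarith, by linarith⟩,
      abs_le.2 ⟨by linarith, by linarith⟩, by linarith, by linarith⟩
  rcases le_or_gt (-(1:ℝ)/3) (2*u1 - (u0+u1+u2)) with hw1 | hw1
  · exact ⟨0, 1, 0, Or.inl rfl, Or.inr rfl, Or.inl rfl,
      abs_le.2 ⟨by linarith, by linarith⟩, abs_le.2 ⟨by linarith, by linarith⟩,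
      abs_le.2 ⟨by linarith, by linarith⟩, by linarith, by linarith⟩
  rcases le_or_gt (-(1:ℝ)/3) (2*u2 - (u0+u1+u2)) with hw2 | hw2
  · exact ⟨0, 0, 1, Or.inl rfl, Or.inl rfl, Or.inr rfl,
      abs_le.2 ⟨by linarith, by linarith⟩, abs_le.2 ⟨by linarith, by linarith⟩,
      abs_le.2 ⟨by linarith, by linarith⟩, by linarith, by linarith⟩
  rcases lt_or_ge (u0 + u1 + u2) 2 with hs2 | hs2
  · exact ⟨0, 0, 0, Or.inl rfl, Or.inl rfl, Or.inl rfl,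
      abs_le.2 ⟨by linarith, by linarith⟩, abs_le.2 ⟨by linarith, by linarith⟩,
      abs_le.2 ⟨by linarith, by linarith⟩, by linarith, by linarith⟩
  rcases le_or_gt (2*u0 - (u0+u1+u2)) (-(2:ℝ)/3) with hz0 | hz0
  · exact ⟨0, 1, 1, Or.inl rfl, Or.inr rfl, Or.inr rfl,
      abs_le.2 ⟨by linarith, by linarith⟩, abs_le.2 ⟨by linarith, by linarith⟩,
      abs_le.2 ⟨by linarith, by linarith⟩, by linarith, by linarith⟩
  rcases le_or_gt (2*u1 - (u0+u1+u2)) (-(2:ℝ)/3) with hz1 | hz1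
  · exact ⟨1, 0, 1, Or.inr rfl, Or.inl rfl, Or.inr rfl,
      abs_le.2 ⟨by linarith, by linarith⟩, abs_le.2 ⟨by linarith, by linarith⟩,
      abs_le.2 ⟨by linarith, by linarith⟩, by linarith, by linarith⟩
  · exact ⟨1, 1, 0, Or.inr rfl, Or.inr rfl, Or.inl rfl,
      abs_le.2 ⟨by linarith, by linarith⟩, abs_le.2 ⟨by linarith, by linarith⟩,
      abs_le.2 ⟨by linarith, by linarith⟩, by linarith, by linarith⟩

/-- Completeness of the gadget: for any `u ∈ [0,1]³` and sign `b ∈ {-1,1}`, there is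
`z ∈ {0,1}³` with `‖G(u-z)‖_∞ ≤ 4/3`, sign agreement, and `|1ᵀ(u-z)| ≤ 2`. -/
theorem gadget_completeness (u : Fin 3 → ℝ) (hu : ∀ i, u i ∈ Set.Icc (0 : ℝ) 1)
    (b : ℝ) (hb : b = -1 ∨ b = 1) :
    ∃ z : Fin 3 → ℝ, (∀ i, z i = 0 ∨ z i = 1) ∧
      ‖Gmat.mulVec (u - z)‖ ≤ 4 / 3 ∧
      0 ≤ b * ((u 0 + u 1 + u 2) - (z 0 + z 1 + z 2)) ∧
      |(u 0 + u 1 + u 2) - (z 0 + z 1 + z 2)| ≤ 2 := by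
  have hu0 := hu 0; have hu1 := hu 1; have hu2 := hu 2
  simp only [Set.mem_Icc] at hu0 hu1 hu2
  rcases hb with hb | hb
  · -- b = -1 : apply core to 1 - u and flip
    obtain ⟨z0, z1, z2, hz0, hz1, hz2, e0, e1, e2, ht0, ht2⟩ :=
      gadget_core (1 - u 0) (1 - u 1) (1 - u 2)
        (by linarith [hu0.2]) (by linarith [hu0.1]) (by linarith [hu1.2])
        (by linarith [hu1.1]) (by linarith [hu2.2]) (by linarith [hu2.1])
    rw [abs_le] at e0 e1 e2
    refine ⟨![1 - z0, 1 - z1, 1 - z2], ?_, ?_, ?_, ?_⟩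
    · intro i
      fin_cases i
      · rcases hz0 with h | h <;> [right; left] <;> simp [h]
      · rcases hz1 with h | h <;> [right; left] <;> simp [h]
      · rcases hz2 with h | h <;> [right; left] <;> simp [h]
    · rw [pi_norm_le_iff_of_nonneg (by norm_num)]
      intro i
      fin_cases i <;>
        simp [Gmat, Matrix.mulVec, dotProduct, Fin.sum_univ_three,
          Real.norm_eq_abs] <;>
        rw [abs_le] <;> constructor <;>
        linarith [e0.1, e0.2, e1.1, e1.2, e2.1, e2.2]
    · simp only [Matrix.cons_val_zero, Matrix.cons_val_one, Matrix.head_cons,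
        Matrix.cons_val_two, Matrix.tail_cons, hb]
      nlinarith
    · simp only [Matrix.cons_val_zero, Matrix.cons_val_one, Matrix.head_cons,
        Matrix.cons_val_two, Matrix.tail_cons]
      rw [abs_le]; constructor <;> linarith
  · -- b = 1 : apply core directly
    obtain ⟨z0, z1, z2, hz0, hz1, hz2, e0, e1, e2, ht0, ht2⟩ :=
      gadget_core (u 0) (u 1) (u 2) hu0.1 hu0.2 hu1.1 hu1.2 hu2.1 hu2.2
    rw [abs_le] at e0 e1 e2
    refine ⟨![z0, z1, z2], ?_, ?_, ?_, ?_⟩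
    · intro i
      fin_cases i <;> simpa using by assumption
    · rw [pi_norm_le_iff_of_nonneg (by norm_num)]
      intro i
      fin_cases i <;>
        simp [Gmat, Matrix.mulVec, dotProduct, Fin.sum_univ_three,
          Real.norm_eq_abs] <;>
        rw [abs_le] <;> constructor <;>
        linarith [e0.1, e0.2, e1.1, e1.2, e2.1, e2.2]
    · simp only [Matrix.cons_val_zero, Matrix.cons_val_one, Matrix.head_cons,
        Matrix.cons_val_two, Matrix.tail_cons, hb]
      nlinarith
    · simp only [Matrix.cons_val_zero, Matrix.cons_val_one, Matrix.head_cons,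
        Matrix.cons_val_two, Matrix.tail_cons]
      rw [abs_le]; constructor <;> linarith
end

section
/- Let B ∈ ℝ^{m×n} be a NAE3SAT clause matrix determined by index functions i₁,i₂,i₃ : [m] → [n] and signs b₁,b₂,b₃ : [m] → {−1,1} (the j-th row of B is b₁(j)e^{(i₁(j))} + b₂(j)e^{(i₂(j))} + b₃(j)e^{(i₃(j))}). Suppose ψ ∈ {0,1}ⁿ NAE-satisfies B, i.e. ‖B((1/2)·1 − ψ)‖_∞ ≤ 1/2. If d ∈ ℝⁿ is any vector satisfying (1 − 2ψᵢ)·dᵢ ≥ 0 and |dᵢ| ≤ 2 for every i ∈ [n], then ‖Bd‖_∞ ≤ 4. -/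
/-- `B` is a NAE3SAT clause matrix: each row is `b₁e^{i₁} + b₂e^{i₂} + b₃e^{i₃}`
with signs `b₁,b₂,b₃ ∈ {-1,1}`. -/
def IsNAEClauseMatrix {m n : ℕ} (B : Matrix (Fin m) (Fin n) ℝ) : Prop :=
  ∃ (i1 i2 i3 : Fin m → Fin n) (b1 b2 b3 : Fin m → ℝ),
    (∀ j, (b1 j = -1 ∨ b1 j = 1) ∧ (b2 j = -1 ∨ b2 j = 1) ∧ (b3 j = -1 ∨ b3 j = 1)) ∧
    (∀ j i, B j i = (if i1 j = i then b1 j else 0) + (if i2 j = i then b2 j else 0) +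
      (if i3 j = i then b3 j else 0))

/-- `ψ ∈ {0,1}ⁿ` NAE-satisfies `B` if `‖B((1/2)·1 - ψ)‖_∞ ≤ 1/2`. -/
def NAESatisfies {m n : ℕ} (B : Matrix (Fin m) (Fin n) ℝ) (ψ : Fin n → ℝ) : Prop :=
  (∀ i, ψ i = 0 ∨ ψ i = 1) ∧ ‖B.mulVec ((fun _ => (1 : ℝ) / 2) - ψ)‖ ≤ 1 / 2

lemma three_term_bound (s1 s2 s3 u1 u2 u3 : ℝ)
    (hs1 : s1 = -1 ∨ s1 = 1) (hs2 : s2 = -1 ∨ s2 = 1) (hs3 : s3 = -1 ∨ s3 = 1)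
    (hsum : |s1 + s2 + s3| ≤ 1)
    (hu1 : 0 ≤ u1) (hu1' : u1 ≤ 2) (hu2 : 0 ≤ u2) (hu2' : u2 ≤ 2)
    (hu3 : 0 ≤ u3) (hu3' : u3 ≤ 2) :
    |s1 * u1 + s2 * u2 + s3 * u3| ≤ 4 := by
  rw [abs_le] at hsum ⊢
  rcases hs1 with h1 | h1 <;> rcases hs2 with h2 | h2 <;> rcases hs3 with h3 | h3 <;>
    subst h1 <;> subst h2 <;> subst h3 <;>
    constructor <;> nlinarith [hsum.1, hsum.2]

/-- If `ψ` NAE-satisfies the clause matrix `B` and `d` satisfies the sign agreement and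
boundedness conditions, then `‖Bd‖_∞ ≤ 4`. -/
theorem clause_matrix_bound {m n : ℕ} (B : Matrix (Fin m) (Fin n) ℝ)
    (hB : IsNAEClauseMatrix B) (ψ : Fin n → ℝ) (hψ : NAESatisfies B ψ)
    (d : Fin n → ℝ) (hd : ∀ i, 0 ≤ (1 - 2 * ψ i) * d i ∧ |d i| ≤ 2) :
    ‖B.mulVec d‖ ≤ 4 := by
  obtain ⟨i1, i2, i3, b1, b2, b3, hb, hBdef⟩ := hB
  obtain ⟨hψ01, hψnorm⟩ := hψ
  have hrow : ∀ (v : Fin n → ℝ) j,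
      B.mulVec v j = b1 j * v (i1 j) + b2 j * v (i2 j) + b3 j * v (i3 j) := by
    intro v j
    simp only [Matrix.mulVec, dotProduct, hBdef, add_mul, Finset.sum_add_distrib,
      ite_mul, zero_mul]
    simp [Finset.sum_ite_eq]
  have hm : ∀ j, |B.mulVec ((fun _ => (1 : ℝ) / 2) - ψ) j| ≤ 1 / 2 := by
    intro j
    calc |B.mulVec ((fun _ => (1 : ℝ) / 2) - ψ) j|
        = ‖B.mulVec ((fun _ => (1 : ℝ) / 2) - ψ) j‖ := (Real.norm_eq_abs _).symm
      _ ≤ ‖B.mulVec ((fun _ => (1 : ℝ) / 2) - ψ)‖ := norm_le_pi_norm _ j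
      _ ≤ 1 / 2 := hψnorm
  rw [pi_norm_le_iff_of_nonneg (by norm_num)]
  intro j
  rw [Real.norm_eq_abs, hrow]
  obtain ⟨hb1, hb2, hb3⟩ := hb j
  -- signs
  have key : ∀ (k : Fin n) (b : ℝ), (b = -1 ∨ b = 1) →
      b * d k = (b * (1 - 2 * ψ k)) * ((1 - 2 * ψ k) * d k) := by
    intro k b hbk
    rcases hψ01 k with h | h <;> rw [h] <;> ring
  have hx : ∀ k : Fin n, (1 - 2 * ψ k = -1 ∨ 1 - 2 * ψ k = 1) := by
    intro k; rcases hψ01 k with h | h <;> rw [h] <;> [right; left] <;> norm_num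
  have hs : ∀ (k : Fin n) (b : ℝ), (b = -1 ∨ b = 1) →
      (b * (1 - 2 * ψ k) = -1 ∨ b * (1 - 2 * ψ k) = 1) := by
    intro k b hbk
    rcases hbk with h | h <;> rcases hx k with h' | h' <;> rw [h, h'] <;>
      [right; left; left; right] <;> norm_num
  have hu : ∀ k : Fin n, 0 ≤ (1 - 2 * ψ k) * d k ∧ (1 - 2 * ψ k) * d k ≤ 2 := by
    intro k
    refine ⟨(hd k).1, ?_⟩
    have := (hd k).2
    rcases hx k with h | h <;> rw [h] <;> rw [abs_le] at this <;> linarith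
  have hsum : |b1 j * (1 - 2 * ψ (i1 j)) + b2 j * (1 - 2 * ψ (i2 j)) +
      b3 j * (1 - 2 * ψ (i3 j))| ≤ 1 := by
    have h := hm j
    rw [hrow] at h
    simp only [Pi.sub_apply] at h
    rw [abs_le] at h ⊢
    constructor <;> nlinarith [h.1, h.2]
  rw [key (i1 j) _ hb1, key (i2 j) _ hb2, key (i3 j) _ hb3]
  exact three_term_bound _ _ _ _ _ _ (hs _ _ hb1) (hs _ _ hb2) (hs _ _ hb3) hsum
    (hu _).1 (hu _).2 (hu _).1 (hu _).2 (hu _).1 (hu _).2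
end

section
/- Let B ∈ ℝ^{m×n} be a NAE3SAT clause matrix, and let A ∈ ℝ^{(m+3n)×3n} be the block matrix whose blocks, from top to bottom, are [⅓B ⅓B ⅓B], [I_n I_n −I_n], [I_n −I_n I_n], and [−I_n I_n I_n]. If there exists ψ ∈ {0,1}ⁿ that NAE-satisfies B, then lindisc(A) ≤ 4/3; that is, for every w ∈ [0,1]^{3n} there exists x ∈ {0,1}^{3n} with ‖A(w − x)‖_∞ ≤ 4/3. -/
set_option maxHeartbeats 1000000

/-- Core rounding lemma for a sorted triple. -/
lemma key_sorted (u v z : ℝ) (hu0 : 0 ≤ u) (hu1 : u ≤ 1) (hv0 : 0 ≤ v) (hv1 : v ≤ 1)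
    (hz0 : 0 ≤ z) (hz1 : z ≤ 1) (hvu : v ≤ u) (hzv : z ≤ v) :
    ∃ p q r : ℝ, (p = 0 ∨ p = 1) ∧ (q = 0 ∨ q = 1) ∧ (r = 0 ∨ r = 1) ∧
      0 ≤ (u - p) + (v - q) + (z - r) ∧ (u - p) + (v - q) + (z - r) ≤ 2 ∧
      -(4/3) ≤ -(u-p) + (v-q) + (z-r) ∧ -(u-p) + (v-q) + (z-r) ≤ 4/3 ∧
      -(4/3) ≤ (u-p) - (v-q) + (z-r) ∧ (u-p) - (v-q) + (z-r) ≤ 4/3 ∧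
      -(4/3) ≤ (u-p) + (v-q) - (z-r) ∧ (u-p) + (v-q) - (z-r) ≤ 4/3 := by
  by_cases hs : u + v + z ≤ 2
  · by_cases hm : u + v - z ≤ 4/3
    · exact ⟨0, 0, 0, Or.inl rfl, Or.inl rfl, Or.inl rfl, by linarith, by linarith,
        by linarith, by linarith, by linarith, by linarith, by linarith, by linarith⟩
    · push_neg at hm
      exact ⟨1, 0, 0, Or.inr rfl, Or.inl rfl, Or.inl rfl, by linarith, by linarith,
        by linarith, by linarith, by linarith, by linarith, by linarith, by linarith⟩
  · push_neg at hs
    exact ⟨1, 1, 0, Or.inr rfl, Or.inr rfl, Or.inl rfl, by linarith, by linarith,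
      by linarith, by linarith, by linarith, by linarith, by linarith, by linarith⟩

/-- Rounding lemma, unsorted version: there is a 0/1 rounding with sum of residues in `[0,2]`
and each residue within `2/3` of half the residue sum. -/
lemma key_pos (u v z : ℝ) (hu0 : 0 ≤ u) (hu1 : u ≤ 1) (hv0 : 0 ≤ v) (hv1 : v ≤ 1)
    (hz0 : 0 ≤ z) (hz1 : z ≤ 1) :
    ∃ p q r : ℝ, (p = 0 ∨ p = 1) ∧ (q = 0 ∨ q = 1) ∧ (r = 0 ∨ r = 1) ∧
      0 ≤ (u - p) + (v - q) + (z - r) ∧ (u - p) + (v - q) + (z - r) ≤ 2 ∧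
      -(4/3) ≤ -(u-p) + (v-q) + (z-r) ∧ -(u-p) + (v-q) + (z-r) ≤ 4/3 ∧
      -(4/3) ≤ (u-p) - (v-q) + (z-r) ∧ (u-p) - (v-q) + (z-r) ≤ 4/3 ∧
      -(4/3) ≤ (u-p) + (v-q) - (z-r) ∧ (u-p) + (v-q) - (z-r) ≤ 4/3 := by
  rcases le_total v u with h1 | h1 <;> rcases le_total z v with h2 | h2 <;>
    rcases le_total z u with h3 | h3
  · obtain ⟨p, q, r, hp, hq, hr, c1, c2, c3, c4, c5, c6, c7, c8⟩ :=
      key_sorted u v z hu0 hu1 hv0 hv1 hz0 hz1 h1 h2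
    refine ⟨p, q, r, hp, hq, hr, ?_, ?_, ?_, ?_, ?_, ?_, ?_, ?_⟩ <;> linarith
  · obtain ⟨p, q, r, hp, hq, hr, c1, c2, c3, c4, c5, c6, c7, c8⟩ :=
      key_sorted u v z hu0 hu1 hv0 hv1 hz0 hz1 h1 h2
    refine ⟨p, q, r, hp, hq, hr, ?_, ?_, ?_, ?_, ?_, ?_, ?_, ?_⟩ <;> linarith
  · obtain ⟨p, q, r, hp, hq, hr, c1, c2, c3, c4, c5, c6, c7, c8⟩ :=
      key_sorted u z v hu0 hu1 hz0 hz1 hv0 hv1 h3 h2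
    refine ⟨p, r, q, hp, hr, hq, ?_, ?_, ?_, ?_, ?_, ?_, ?_, ?_⟩ <;> linarith
  · obtain ⟨p, q, r, hp, hq, hr, c1, c2, c3, c4, c5, c6, c7, c8⟩ :=
      key_sorted z u v hz0 hz1 hu0 hu1 hv0 hv1 h3 h1
    refine ⟨q, r, p, hq, hr, hp, ?_, ?_, ?_, ?_, ?_, ?_, ?_, ?_⟩ <;> linarith
  · obtain ⟨p, q, r, hp, hq, hr, c1, c2, c3, c4, c5, c6, c7, c8⟩ :=
      key_sorted v u z hv0 hv1 hu0 hu1 hz0 hz1 h1 h3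
    refine ⟨q, p, r, hq, hp, hr, ?_, ?_, ?_, ?_, ?_, ?_, ?_, ?_⟩ <;> linarith
  · obtain ⟨p, q, r, hp, hq, hr, c1, c2, c3, c4, c5, c6, c7, c8⟩ :=
      key_sorted v z u hv0 hv1 hz0 hz1 hu0 hu1 h2 h3
    refine ⟨r, p, q, hr, hp, hq, ?_, ?_, ?_, ?_, ?_, ?_, ?_, ?_⟩ <;> linarith
  · obtain ⟨p, q, r, hp, hq, hr, c1, c2, c3, c4, c5, c6, c7, c8⟩ :=
      key_sorted z v u hz0 hz1 hv0 hv1 hu0 hu1 h2 h1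
    refine ⟨r, q, p, hr, hq, hp, ?_, ?_, ?_, ?_, ?_, ?_, ?_, ?_⟩ <;> linarith
  · obtain ⟨p, q, r, hp, hq, hr, c1, c2, c3, c4, c5, c6, c7, c8⟩ :=
      key_sorted z v u hz0 hz1 hv0 hv1 hu0 hu1 h2 h1
    refine ⟨r, q, p, hr, hq, hp, ?_, ?_, ?_, ?_, ?_, ?_, ?_, ?_⟩ <;> linarith

/-- Rounding lemma with sign depending on `ψ`. -/
lemma key_psi (ψi u v z : ℝ) (hψ : ψi = 0 ∨ ψi = 1) (hu0 : 0 ≤ u) (hu1 : u ≤ 1)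
    (hv0 : 0 ≤ v) (hv1 : v ≤ 1) (hz0 : 0 ≤ z) (hz1 : z ≤ 1) :
    ∃ p q r : ℝ, (p = 0 ∨ p = 1) ∧ (q = 0 ∨ q = 1) ∧ (r = 0 ∨ r = 1) ∧
      (ψi = 0 → 0 ≤ (u - p) + (v - q) + (z - r) ∧ (u - p) + (v - q) + (z - r) ≤ 2) ∧
      (ψi = 1 → -2 ≤ (u - p) + (v - q) + (z - r) ∧ (u - p) + (v - q) + (z - r) ≤ 0) ∧
      -(4/3) ≤ -(u-p) + (v-q) + (z-r) ∧ -(u-p) + (v-q) + (z-r) ≤ 4/3 ∧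
      -(4/3) ≤ (u-p) - (v-q) + (z-r) ∧ (u-p) - (v-q) + (z-r) ≤ 4/3 ∧
      -(4/3) ≤ (u-p) + (v-q) - (z-r) ∧ (u-p) + (v-q) - (z-r) ≤ 4/3 := by
  rcases hψ with hψ | hψ
  · obtain ⟨p, q, r, hp, hq, hr, c1, c2, c3, c4, c5, c6, c7, c8⟩ :=
      key_pos u v z hu0 hu1 hv0 hv1 hz0 hz1
    refine ⟨p, q, r, hp, hq, hr, fun _ => ⟨c1, c2⟩, fun h => absurd (hψ ▸ h) (by norm_num),
      c3, c4, c5, c6, c7, c8⟩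
  · obtain ⟨p, q, r, hp, hq, hr, c1, c2, c3, c4, c5, c6, c7, c8⟩ :=
      key_pos (1 - u) (1 - v) (1 - z) (by linarith) (by linarith) (by linarith)
        (by linarith) (by linarith) (by linarith)
    have bit : ∀ t : ℝ, (t = 0 ∨ t = 1) → ((1 - t = 0) ∨ (1 - t = 1)) := by
      rintro t (rfl | rfl) <;> [right; left] <;> norm_num
    refine ⟨1 - p, 1 - q, 1 - r, bit p hp, bit q hq, bit r hr,
      fun h => absurd (hψ ▸ h) (by norm_num), fun _ => ⟨by linarith, by linarith⟩,
      ?_, ?_, ?_, ?_, ?_, ?_⟩ <;> linarith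
lemma clause_bound (e1 e2 e3 D1 D2 D3 ψ1 ψ2 ψ3 : ℝ)
    (he1 : e1 = -1 ∨ e1 = 1) (he2 : e2 = -1 ∨ e2 = 1) (he3 : e3 = -1 ∨ e3 = 1)
    (hψ1 : ψ1 = 0 ∨ ψ1 = 1) (hψ2 : ψ2 = 0 ∨ ψ2 = 1) (hψ3 : ψ3 = 0 ∨ ψ3 = 1)
    (hD1 : (ψ1 = 0 → 0 ≤ D1 ∧ D1 ≤ 2) ∧ (ψ1 = 1 → -2 ≤ D1 ∧ D1 ≤ 0))
    (hD2 : (ψ2 = 0 → 0 ≤ D2 ∧ D2 ≤ 2) ∧ (ψ2 = 1 → -2 ≤ D2 ∧ D2 ≤ 0))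
    (hD3 : (ψ3 = 0 → 0 ≤ D3 ∧ D3 ≤ 2) ∧ (ψ3 = 1 → -2 ≤ D3 ∧ D3 ≤ 0))
    (hnae : |e1 * (1/2 - ψ1) + e2 * (1/2 - ψ2) + e3 * (1/2 - ψ3)| ≤ 1/2) :
    |e1 * D1 + e2 * D2 + e3 * D3| ≤ 4 := by
  rw [abs_le] at hnae ⊢
  obtain ⟨hn1, hn2⟩ := hnae
  rcases hψ1 with rfl | rfl <;> rcases hψ2 with rfl | rfl <;> rcases hψ3 with rfl | rfl <;>
    norm_num at hD1 hD2 hD3 <;>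
    rcases he1 with rfl | rfl <;> rcases he2 with rfl | rfl <;> rcases he3 with rfl | rfl <;>
    norm_num at hn1 <;> norm_num at hn2 <;> (try norm_num) <;>
    constructor <;>
    linarith [hD1.1, hD1.2, hD2.1, hD2.2, hD3.1, hD3.2]

/-- The block matrix `A` with row blocks `[⅓B ⅓B ⅓B]`, `[I I -I]`, `[I -I I]`, `[-I I I]`. -/
noncomputable def Amat {m n : ℕ} (B : Matrix (Fin m) (Fin n) ℝ) :
    Matrix (Fin m ⊕ (Fin n ⊕ Fin n ⊕ Fin n)) (Fin n ⊕ Fin n ⊕ Fin n) ℝ :=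
  Matrix.of fun r c =>
    match r with
    | Sum.inl j => (1 / 3) * B j (Sum.elim id (Sum.elim id id) c)
    | Sum.inr (Sum.inl k) =>
        Sum.elim (fun i => if k = i then (1 : ℝ) else 0)
          (Sum.elim (fun i => if k = i then (1 : ℝ) else 0)
            (fun i => if k = i then (-1 : ℝ) else 0)) c
    | Sum.inr (Sum.inr (Sum.inl k)) =>
        Sum.elim (fun i => if k = i then (1 : ℝ) else 0)
          (Sum.elim (fun i => if k = i then (-1 : ℝ) else 0)
            (fun i => if k = i then (1 : ℝ) else 0)) c
    | Sum.inr (Sum.inr (Sum.inr k)) =>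
        Sum.elim (fun i => if k = i then (-1 : ℝ) else 0)
          (Sum.elim (fun i => if k = i then (1 : ℝ) else 0)
            (fun i => if k = i then (1 : ℝ) else 0)) c

lemma rowTop {m n : ℕ} (B : Matrix (Fin m) (Fin n) ℝ)
    (i1 i2 i3 : Fin m → Fin n) (b1 b2 b3 : Fin m → ℝ)
    (hBrow : ∀ j i, B j i = (if i1 j = i then b1 j else 0) + (if i2 j = i then b2 j else 0) +
      (if i3 j = i then b3 j else 0))
    (w x : (Fin n ⊕ Fin n ⊕ Fin n) → ℝ) (j : Fin m) :
    (Amat B).mulVec (w - x) (Sum.inl j) =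
      1/3 * (b1 j * ((w - x) (Sum.inl (i1 j)) + (w - x) (Sum.inr (Sum.inl (i1 j)))
              + (w - x) (Sum.inr (Sum.inr (i1 j))))
           + b2 j * ((w - x) (Sum.inl (i2 j)) + (w - x) (Sum.inr (Sum.inl (i2 j)))
              + (w - x) (Sum.inr (Sum.inr (i2 j))))
           + b3 j * ((w - x) (Sum.inl (i3 j)) + (w - x) (Sum.inr (Sum.inl (i3 j)))
              + (w - x) (Sum.inr (Sum.inr (i3 j))))) := by
  have h1 : ∀ T : Fin n → ℝ, ∑ i, 1/3 * B j i * T i =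
      1/3 * (b1 j * T (i1 j) + b2 j * T (i2 j) + b3 j * T (i3 j)) := by
    intro T
    simp only [hBrow, add_mul, mul_add, ite_mul, mul_ite, mul_zero, zero_mul,
      Finset.sum_add_distrib, Finset.sum_ite_eq, Finset.mem_univ, if_true]
    ring
  simp only [Matrix.mulVec, dotProduct, Amat, Matrix.of_apply, Fintype.sum_sum_type,
    Sum.elim_inl, Sum.elim_inr, id_eq]
  rw [h1, h1, h1]
  ring

lemma rowB1 {m n : ℕ} (B : Matrix (Fin m) (Fin n) ℝ)
    (w x : (Fin n ⊕ Fin n ⊕ Fin n) → ℝ) (k : Fin n) :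
    (Amat B).mulVec (w - x) (Sum.inr (Sum.inl k)) =
      (w - x) (Sum.inl k) + (w - x) (Sum.inr (Sum.inl k)) - (w - x) (Sum.inr (Sum.inr k)) := by
  simp only [Matrix.mulVec, dotProduct, Amat, Matrix.of_apply, Fintype.sum_sum_type,
    Sum.elim_inl, Sum.elim_inr, ite_mul, one_mul, zero_mul, neg_mul,
    Finset.sum_ite_eq, Finset.mem_univ, if_true]
  ring

lemma rowB2 {m n : ℕ} (B : Matrix (Fin m) (Fin n) ℝ)
    (w x : (Fin n ⊕ Fin n ⊕ Fin n) → ℝ) (k : Fin n) :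
    (Amat B).mulVec (w - x) (Sum.inr (Sum.inr (Sum.inl k))) =
      (w - x) (Sum.inl k) - (w - x) (Sum.inr (Sum.inl k)) + (w - x) (Sum.inr (Sum.inr k)) := by
  simp only [Matrix.mulVec, dotProduct, Amat, Matrix.of_apply, Fintype.sum_sum_type,
    Sum.elim_inl, Sum.elim_inr, ite_mul, one_mul, zero_mul, neg_mul,
    Finset.sum_ite_eq, Finset.mem_univ, if_true]
  ring

lemma rowB3 {m n : ℕ} (B : Matrix (Fin m) (Fin n) ℝ)
    (w x : (Fin n ⊕ Fin n ⊕ Fin n) → ℝ) (k : Fin n) :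
    (Amat B).mulVec (w - x) (Sum.inr (Sum.inr (Sum.inr k))) =
      -(w - x) (Sum.inl k) + (w - x) (Sum.inr (Sum.inl k)) + (w - x) (Sum.inr (Sum.inr k)) := by
  simp only [Matrix.mulVec, dotProduct, Amat, Matrix.of_apply, Fintype.sum_sum_type,
    Sum.elim_inl, Sum.elim_inr, ite_mul, one_mul, zero_mul, neg_mul,
    Finset.sum_ite_eq, Finset.mem_univ, if_true]
  ring

/-- Completeness of the NP-hardness reduction: if `B` has a NAE-satisfying assignment, then
for every `w ∈ [0,1]^{3n}` there is `x ∈ {0,1}^{3n}` with `‖A(w-x)‖_∞ ≤ 4/3`. -/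
theorem reduction_completeness {m n : ℕ} (B : Matrix (Fin m) (Fin n) ℝ)
    (hB : IsNAEClauseMatrix B) (hsat : ∃ ψ : Fin n → ℝ, NAESatisfies B ψ) :
    ∀ w : (Fin n ⊕ Fin n ⊕ Fin n) → ℝ, (∀ i, w i ∈ Set.Icc (0 : ℝ) 1) →
      ∃ x : (Fin n ⊕ Fin n ⊕ Fin n) → ℝ, (∀ i, x i = 0 ∨ x i = 1) ∧
        ‖(Amat B).mulVec (w - x)‖ ≤ 4 / 3 := by
  obtain ⟨i1, i2, i3, b1, b2, b3, hb, hBrow⟩ := hB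
  obtain ⟨ψ, hψ01, hψn⟩ := hsat
  intro w hw
  have hkey := fun i : Fin n => key_psi (ψ i) (w (Sum.inl i)) (w (Sum.inr (Sum.inl i)))
    (w (Sum.inr (Sum.inr i))) (hψ01 i) (hw _).1 (hw _).2 (hw _).1 (hw _).2 (hw _).1 (hw _).2
  choose p q r hp hq hr hpos hneg w1lo w1hi w2lo w2hi w3lo w3hi using hkey
  refine ⟨Sum.elim p (Sum.elim q r), ?_, ?_⟩
  · rintro (i | i | i)
    exacts [hp i, hq i, hr i]
  · set x := Sum.elim p (Sum.elim q r) with hxdef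
    have hx1 : ∀ i, (w - x) (Sum.inl i) = w (Sum.inl i) - p i := by
      intro i; simp [hxdef]
    have hx2 : ∀ i, (w - x) (Sum.inr (Sum.inl i)) = w (Sum.inr (Sum.inl i)) - q i := by
      intro i; simp [hxdef]
    have hx3 : ∀ i, (w - x) (Sum.inr (Sum.inr i)) = w (Sum.inr (Sum.inr i)) - r i := by
      intro i; simp [hxdef]
    rw [pi_norm_le_iff_of_nonneg (by norm_num : (0:ℝ) ≤ 4/3)]
    rintro (j | k | k | k) <;> rw [Real.norm_eq_abs]
    · -- clause row
      rw [rowTop B i1 i2 i3 b1 b2 b3 hBrow w x j]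
      have hnaej : |b1 j * (1/2 - ψ (i1 j)) + b2 j * (1/2 - ψ (i2 j))
          + b3 j * (1/2 - ψ (i3 j))| ≤ 1/2 := by
        have h := (norm_le_pi_norm (B.mulVec ((fun _ => (1:ℝ)/2) - ψ)) j).trans hψn
        rw [Real.norm_eq_abs] at h
        have hrow : B.mulVec ((fun _ => (1:ℝ)/2) - ψ) j =
            b1 j * (1/2 - ψ (i1 j)) + b2 j * (1/2 - ψ (i2 j)) + b3 j * (1/2 - ψ (i3 j)) := by
          simp only [Matrix.mulVec, dotProduct, Pi.sub_apply, hBrow, add_mul, ite_mul,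
            zero_mul, Finset.sum_add_distrib, Finset.sum_ite_eq, Finset.mem_univ, if_true]
        rwa [hrow] at h
      have hcb := clause_bound (b1 j) (b2 j) (b3 j)
        ((w - x) (Sum.inl (i1 j)) + (w - x) (Sum.inr (Sum.inl (i1 j)))
          + (w - x) (Sum.inr (Sum.inr (i1 j))))
        ((w - x) (Sum.inl (i2 j)) + (w - x) (Sum.inr (Sum.inl (i2 j)))
          + (w - x) (Sum.inr (Sum.inr (i2 j))))
        ((w - x) (Sum.inl (i3 j)) + (w - x) (Sum.inr (Sum.inl (i3 j)))
          + (w - x) (Sum.inr (Sum.inr (i3 j))))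
        (ψ (i1 j)) (ψ (i2 j)) (ψ (i3 j)) (hb j).1 (hb j).2.1 (hb j).2.2
        (hψ01 (i1 j)) (hψ01 (i2 j)) (hψ01 (i3 j))
        (by rw [hx1, hx2, hx3]; exact ⟨hpos (i1 j), hneg (i1 j)⟩)
        (by rw [hx1, hx2, hx3]; exact ⟨hpos (i2 j), hneg (i2 j)⟩)
        (by rw [hx1, hx2, hx3]; exact ⟨hpos (i3 j), hneg (i3 j)⟩)
        hnaej
      rw [abs_le] at hcb ⊢
      constructor <;> [nlinarith [hcb.1]; nlinarith [hcb.2]]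
    · rw [rowB1 B w x k, hx1, hx2, hx3, abs_le]
      exact ⟨by linarith [w3lo k], by linarith [w3hi k]⟩
    · rw [rowB2 B w x k, hx1, hx2, hx3, abs_le]
      exact ⟨by linarith [w2lo k], by linarith [w2hi k]⟩
    · rw [rowB3 B w x k, hx1, hx2, hx3, abs_le]
      exact ⟨by linarith [w1lo k], by linarith [w1hi k]⟩
end

section
/- Let B ∈ ℝ^{m×n} be a NAE3SAT clause matrix, and let A ∈ ℝ^{(m+3n)×3n} be the block matrix whose blocks, from top to bottom, are [⅓B ⅓B ⅓B], [I_n I_n −I_n], [I_n −I_n I_n], and [−I_n I_n I_n]. If lindisc(A) < 3/2, then there exists ψ ∈ {0,1}ⁿ that NAE-satisfies B, i.e. ‖B((1/2)·1 − ψ)‖_∞ ≤ 1/2. -/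
/-- The linear discrepancy of a matrix. -/
noncomputable def lindisc {I J : Type*} [Fintype I] [Fintype J] (A : Matrix I J ℝ) : ℝ :=
  ⨆ w : {w : J → ℝ // ∀ j, w j ∈ Set.Icc (0 : ℝ) 1},
    ⨅ x : {x : J → ℝ // ∀ j, x j = 0 ∨ x j = 1}, ‖A.mulVec (w.1 - x.1)‖


lemma sign3 (s1 s2 s3 : ℝ) (h1 : s1 = -(1/2) ∨ s1 = 1/2) (h2 : s2 = -(1/2) ∨ s2 = 1/2)
    (h3 : s3 = -(1/2) ∨ s3 = 1/2)
    (e1 : |s1 + s2 - s3| < 3/2) (e2 : |s1 - s2 + s3| < 3/2) (e3 : |-s1 + s2 + s3| < 3/2) :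
    s1 = s2 ∧ s2 = s3 := by
  rw [abs_lt] at e1 e2 e3
  rcases h1 with h1|h1 <;> rcases h2 with h2|h2 <;> rcases h3 with h3|h3 <;>
    subst h1 <;> subst h2 <;> subst h3 <;> constructor <;> first | rfl | linarith [e1.1, e1.2, e2.1, e2.2, e3.1, e3.2]

lemma sum3 (t1 t2 t3 : ℝ) (h1 : t1 = -(1/2) ∨ t1 = 1/2) (h2 : t2 = -(1/2) ∨ t2 = 1/2)
    (h3 : t3 = -(1/2) ∨ t3 = 1/2) (e : |t1 + t2 + t3| < 3/2) : |t1 + t2 + t3| ≤ 1/2 := by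
  rw [abs_lt] at e
  rw [abs_le]
  rcases h1 with h1|h1 <;> rcases h2 with h2|h2 <;> rcases h3 with h3|h3 <;>
    subst h1 <;> subst h2 <;> subst h3 <;> constructor <;> linarith [e.1, e.2]

lemma rowcomp {m n : ℕ} (B : Matrix (Fin m) (Fin n) ℝ) (v : (Fin n ⊕ Fin n ⊕ Fin n) → ℝ) :
    (∀ k, (Amat B).mulVec v (Sum.inr (Sum.inl k))
        = v (Sum.inl k) + v (Sum.inr (Sum.inl k)) - v (Sum.inr (Sum.inr k)))
    ∧ (∀ k, (Amat B).mulVec v (Sum.inr (Sum.inr (Sum.inl k)))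
        = v (Sum.inl k) - v (Sum.inr (Sum.inl k)) + v (Sum.inr (Sum.inr k)))
    ∧ (∀ k, (Amat B).mulVec v (Sum.inr (Sum.inr (Sum.inr k)))
        = -v (Sum.inl k) + v (Sum.inr (Sum.inl k)) + v (Sum.inr (Sum.inr k)))
    ∧ (∀ j, (Amat B).mulVec v (Sum.inl j)
        = (1/3) * (∑ i, B j i * v (Sum.inl i) + ∑ i, B j i * v (Sum.inr (Sum.inl i))
            + ∑ i, B j i * v (Sum.inr (Sum.inr i)))) := by
  refine ⟨fun k => ?_, fun k => ?_, fun k => ?_, fun j => ?_⟩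
  · simp [Amat, Matrix.mulVec, dotProduct, Fintype.sum_sum_type, ite_mul]; ring
  · simp [Amat, Matrix.mulVec, dotProduct, Fintype.sum_sum_type, ite_mul]; ring
  · simp [Amat, Matrix.mulVec, dotProduct, Fintype.sum_sum_type, ite_mul]; ring
  · simp [Amat, Matrix.mulVec, dotProduct, Fintype.sum_sum_type, mul_add,
      Finset.mul_sum, mul_assoc]
    ring

/-- Soundness of the NP-hardness reduction: if `lindisc(A) < 3/2` then `B` has a
NAE-satisfying assignment. -/
theorem reduction_soundness {m n : ℕ} (B : Matrix (Fin m) (Fin n) ℝ)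
    (hB : IsNAEClauseMatrix B) (h : lindisc (Amat B) < 3 / 2) :
    ∃ ψ : Fin n → ℝ, NAESatisfies B ψ := by
  classical
  obtain ⟨i1, i2, i3, b1, b2, b3, hb, hBdef⟩ := hB
  set A := Amat B with hA
  haveI : Nonempty {x : (Fin n ⊕ Fin n ⊕ Fin n) → ℝ // ∀ j, x j = 0 ∨ x j = 1} :=
    ⟨⟨fun _ => 0, fun _ => Or.inl rfl⟩⟩
  -- the sup family is bounded above
  set C : ℝ := ∑ r, ∑ c, |A r c| with hC
  have hCnn : (0:ℝ) ≤ C := Finset.sum_nonneg fun r _ => Finset.sum_nonneg fun c _ => abs_nonneg _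
  have hbdd : BddAbove (Set.range fun w : {w : (Fin n ⊕ Fin n ⊕ Fin n) → ℝ //
      ∀ j, w j ∈ Set.Icc (0:ℝ) 1} =>
      ⨅ x : {x : (Fin n ⊕ Fin n ⊕ Fin n) → ℝ // ∀ j, x j = 0 ∨ x j = 1},
        ‖A.mulVec (w.1 - x.1)‖) := by
    refine ⟨C, ?_⟩
    rintro y ⟨w, rfl⟩
    have h0 : (⨅ x : {x : (Fin n ⊕ Fin n ⊕ Fin n) → ℝ // ∀ j, x j = 0 ∨ x j = 1},
        ‖A.mulVec (w.1 - x.1)‖) ≤ ‖A.mulVec (w.1 - (fun _ => 0))‖ :=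
      ciInf_le (f := fun x : {x : (Fin n ⊕ Fin n ⊕ Fin n) → ℝ // ∀ j, x j = 0 ∨ x j = 1} =>
          ‖A.mulVec (w.1 - x.1)‖)
        ⟨0, by rintro y ⟨x, rfl⟩; exact norm_nonneg _⟩ ⟨fun _ => 0, fun _ => Or.inl rfl⟩
    refine h0.trans ?_
    have hww : w.1 - (fun _ : Fin n ⊕ Fin n ⊕ Fin n => (0:ℝ)) = w.1 := by
      funext c; simp
    rw [hww, pi_norm_le_iff_of_nonneg hCnn]
    intro r
    rw [Real.norm_eq_abs, Matrix.mulVec, dotProduct]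
    calc |∑ c, A r c * w.1 c| ≤ ∑ c, |A r c * w.1 c| := Finset.abs_sum_le_sum_abs _ _
      _ ≤ ∑ c, |A r c| := by
          refine Finset.sum_le_sum fun c _ => ?_
          rw [abs_mul]
          have hw := w.2 c
          have h1 : |w.1 c| ≤ 1 := abs_le.2 ⟨by linarith [hw.1], hw.2⟩
          nlinarith [abs_nonneg (A r c)]
      _ ≤ C := Finset.single_le_sum (f := fun r => ∑ c, |A r c|)
          (fun r _ => Finset.sum_nonneg fun c _ => abs_nonneg _) (Finset.mem_univ r)
  have hw0 : ∀ j, (fun _ : Fin n ⊕ Fin n ⊕ Fin n => (1:ℝ)/2) j ∈ Set.Icc (0:ℝ) 1 :=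
    fun _ => ⟨by norm_num, by norm_num⟩
  have h1 : (⨅ x : {x : (Fin n ⊕ Fin n ⊕ Fin n) → ℝ // ∀ j, x j = 0 ∨ x j = 1},
      ‖A.mulVec ((fun _ => (1:ℝ)/2) - x.1)‖) < 3/2 :=
    lt_of_le_of_lt (le_ciSup (f := fun w : {w : (Fin n ⊕ Fin n ⊕ Fin n) → ℝ //
        ∀ j, w j ∈ Set.Icc (0:ℝ) 1} =>
      ⨅ x : {x : (Fin n ⊕ Fin n ⊕ Fin n) → ℝ // ∀ j, x j = 0 ∨ x j = 1},
        ‖A.mulVec (w.1 - x.1)‖) hbdd ⟨fun _ => (1:ℝ)/2, hw0⟩) h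
  obtain ⟨x, hx⟩ := exists_lt_of_ciInf_lt
    (f := fun x : {x : (Fin n ⊕ Fin n ⊕ Fin n) → ℝ // ∀ j, x j = 0 ∨ x j = 1} =>
      ‖A.mulVec ((fun _ => (1:ℝ)/2) - x.1)‖) h1
  set v : (Fin n ⊕ Fin n ⊕ Fin n) → ℝ := (fun _ => (1:ℝ)/2) - x.1 with hv
  have hvval : ∀ c, v c = -(1/2) ∨ v c = 1/2 := by
    intro c
    rcases x.2 c with hc | hc
    · right; simp only [hv, Pi.sub_apply, hc]; norm_num
    · left; simp only [hv, Pi.sub_apply, hc]; norm_num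
  have hrow : ∀ r, |A.mulVec v r| < 3/2 := by
    intro r
    calc |A.mulVec v r| = ‖A.mulVec v r‖ := (Real.norm_eq_abs _).symm
      _ ≤ ‖A.mulVec v‖ := norm_le_pi_norm _ r
      _ < 3/2 := hx
  obtain ⟨r2, r3, r4, r1⟩ := rowcomp B v
  -- the three copies agree
  have heq : ∀ k, v (Sum.inl k) = v (Sum.inr (Sum.inl k)) ∧
      v (Sum.inr (Sum.inl k)) = v (Sum.inr (Sum.inr k)) := by
    intro k
    have e1 := hrow (Sum.inr (Sum.inl k)); rw [r2 k] at e1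
    have e2 := hrow (Sum.inr (Sum.inr (Sum.inl k))); rw [r3 k] at e2
    have e3 := hrow (Sum.inr (Sum.inr (Sum.inr k))); rw [r4 k] at e3
    exact sign3 _ _ _ (hvval _) (hvval _) (hvval _) e1 e2 e3
  set ψ : Fin n → ℝ := fun i => x.1 (Sum.inl i) with hψ
  refine ⟨ψ, ⟨fun i => x.2 _, ?_⟩⟩
  have hu : ∀ i : Fin n, ((fun _ : Fin n => (1:ℝ)/2) - ψ) i = v (Sum.inl i) := by
    intro i; simp [hψ, hv]
  rw [pi_norm_le_iff_of_nonneg (by norm_num : (0:ℝ) ≤ 1/2)]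
  intro j
  rw [Real.norm_eq_abs, Matrix.mulVec, dotProduct]
  have hsum : ∀ (f : Fin n → ℝ), ∑ i, B j i * f i
      = b1 j * f (i1 j) + b2 j * f (i2 j) + b3 j * f (i3 j) := by
    intro f
    have : ∀ i, B j i * f i = (if i1 j = i then b1 j * f i else 0)
        + (if i2 j = i then b2 j * f i else 0) + (if i3 j = i then b3 j * f i else 0) := by
      intro i
      rw [hBdef j i]
      split_ifs <;> ring
    rw [Finset.sum_congr rfl fun i _ => this i]
    simp [Finset.sum_add_distrib]
  rw [hsum ((fun _ : Fin n => (1:ℝ)/2) - ψ), hu (i1 j), hu (i2 j), hu (i3 j)]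
  -- row 1 constraint
  have e1 := hrow (Sum.inl j); rw [r1 j] at e1
  have hveq : ∀ i, v (Sum.inr (Sum.inl i)) = v (Sum.inl i) := fun i => ((heq i).1).symm
  have hveq2 : ∀ i, v (Sum.inr (Sum.inr i)) = v (Sum.inl i) := fun i =>
    ((heq i).2.symm.trans ((heq i).1).symm)
  rw [show (∑ i, B j i * v (Sum.inr (Sum.inl i))) = ∑ i, B j i * v (Sum.inl i) from
      Finset.sum_congr rfl fun i _ => by rw [hveq i],
    show (∑ i, B j i * v (Sum.inr (Sum.inr i))) = ∑ i, B j i * v (Sum.inl i) from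
      Finset.sum_congr rfl fun i _ => by rw [hveq2 i]] at e1
  have e1' : |∑ i, B j i * v (Sum.inl i)| < 3/2 := by
    have : (1:ℝ)/3 * (∑ i, B j i * v (Sum.inl i) + ∑ i, B j i * v (Sum.inl i)
        + ∑ i, B j i * v (Sum.inl i)) = ∑ i, B j i * v (Sum.inl i) := by ring
    rwa [this] at e1
  rw [hsum (fun i => v (Sum.inl i))] at e1'
  have hterm : ∀ (b : ℝ) (i : Fin n), (b = -1 ∨ b = 1) →
      (b * v (Sum.inl i) = -(1/2) ∨ b * v (Sum.inl i) = 1/2) := by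
    intro b i hb'
    rcases hb' with hb'|hb' <;> rcases hvval (Sum.inl i) with hvi|hvi <;>
      subst hb' <;> rw [hvi] <;> norm_num
  exact sum3 _ _ _ (hterm _ _ (hb j).1) (hterm _ _ (hb j).2.1) (hterm _ _ (hb j).2.2) e1'
end

section
/- Let B ∈ ℝ^{m×n} be a NAE3SAT clause matrix. Then lindisc(A) ≤ 4/3 if there exists a NAE-satisfying assignment for B, and lindisc(A) ≥ 3/2 if there is no NAE-satisfying assignment for B, where A ∈ ℝ^{(m+3n)×3n} is the block matrix whose blocks, from top to bottom, are [⅓B ⅓B ⅓B], [I_n I_n −I_n], [I_n −I_n I_n], and [−I_n I_n I_n]. In particular, A witnesses a multiplicative gap of (3/2)/(4/3) = 9/8 between the two cases. -/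
section Aux

/-- Sorted per-coordinate rounding lemma. -/
lemma round_sorted (w1 w2 w3 : ℝ)
    (h1 : 0 ≤ w1) (h1' : w1 ≤ 1) (h2 : 0 ≤ w2) (h2' : w2 ≤ 1)
    (h3 : 0 ≤ w3) (h3' : w3 ≤ 1) (h12 : w2 ≤ w1) (h23 : w3 ≤ w2) :
    ∃ x1 x2 x3 : ℝ, (x1 = 0 ∨ x1 = 1) ∧ (x2 = 0 ∨ x2 = 1) ∧ (x3 = 0 ∨ x3 = 1) ∧
      -(4/3) ≤ (w1-x1)+(w2-x2)-(w3-x3) ∧ (w1-x1)+(w2-x2)-(w3-x3) ≤ 4/3 ∧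
      -(4/3) ≤ (w1-x1)-(w2-x2)+(w3-x3) ∧ (w1-x1)-(w2-x2)+(w3-x3) ≤ 4/3 ∧
      -(4/3) ≤ -(w1-x1)+(w2-x2)+(w3-x3) ∧ -(w1-x1)+(w2-x2)+(w3-x3) ≤ 4/3 ∧
      -2 ≤ (w1-x1)+(w2-x2)+(w3-x3) ∧ (w1-x1)+(w2-x2)+(w3-x3) ≤ 0 := by
  rcases le_or_gt (w1+w2+w3) 1 with ht | ht
  · exact ⟨1, 0, 0, Or.inr rfl, Or.inl rfl, Or.inl rfl,
      by linarith, by linarith, by linarith, by linarith, by linarith, by linarith,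
      by linarith, by linarith⟩
  rcases le_or_gt (w1+w2+w3) 2 with ht2 | ht2
  · rcases le_or_gt (2/3) (w1+w2+w3 - 2*w3) with hc | hc
    · exact ⟨1, 1, 0, Or.inr rfl, Or.inr rfl, Or.inl rfl,
        by linarith, by linarith, by linarith, by linarith, by linarith, by linarith,
        by linarith, by linarith⟩
    · exact ⟨1, 1, 1, Or.inr rfl, Or.inr rfl, Or.inr rfl,
        by linarith, by linarith, by linarith, by linarith, by linarith, by linarith,
        by linarith, by linarith⟩
  · exact ⟨1, 1, 1, Or.inr rfl, Or.inr rfl, Or.inr rfl,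
      by linarith, by linarith, by linarith, by linarith, by linarith, by linarith,
      by linarith, by linarith⟩

/-- Unsorted version. -/
lemma round_any (w1 w2 w3 : ℝ)
    (h1 : 0 ≤ w1) (h1' : w1 ≤ 1) (h2 : 0 ≤ w2) (h2' : w2 ≤ 1)
    (h3 : 0 ≤ w3) (h3' : w3 ≤ 1) :
    ∃ x1 x2 x3 : ℝ, (x1 = 0 ∨ x1 = 1) ∧ (x2 = 0 ∨ x2 = 1) ∧ (x3 = 0 ∨ x3 = 1) ∧
      -(4/3) ≤ (w1-x1)+(w2-x2)-(w3-x3) ∧ (w1-x1)+(w2-x2)-(w3-x3) ≤ 4/3 ∧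
      -(4/3) ≤ (w1-x1)-(w2-x2)+(w3-x3) ∧ (w1-x1)-(w2-x2)+(w3-x3) ≤ 4/3 ∧
      -(4/3) ≤ -(w1-x1)+(w2-x2)+(w3-x3) ∧ -(w1-x1)+(w2-x2)+(w3-x3) ≤ 4/3 ∧
      -2 ≤ (w1-x1)+(w2-x2)+(w3-x3) ∧ (w1-x1)+(w2-x2)+(w3-x3) ≤ 0 := by
  rcases le_total w2 w1 with a | a
  · rcases le_total w3 w2 with b | b
    · exact round_sorted w1 w2 w3 h1 h1' h2 h2' h3 h3' a b
    · rcases le_total w3 w1 with c | c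
      · obtain ⟨x1, x3, x2, e1, e3, e2, p1, p2, p3, p4, p5, p6, p7, p8⟩ :=
          round_sorted w1 w3 w2 h1 h1' h3 h3' h2 h2' c b
        exact ⟨x1, x2, x3, e1, e2, e3, by linarith, by linarith, by linarith, by linarith,
          by linarith, by linarith, by linarith, by linarith⟩
      · obtain ⟨x3, x1, x2, e3, e1, e2, p1, p2, p3, p4, p5, p6, p7, p8⟩ :=
          round_sorted w3 w1 w2 h3 h3' h1 h1' h2 h2' c a
        exact ⟨x1, x2, x3, e1, e2, e3, by linarith, by linarith, by linarith, by linarith,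
          by linarith, by linarith, by linarith, by linarith⟩
  · rcases le_total w3 w1 with b | b
    · obtain ⟨x2, x1, x3, e2, e1, e3, p1, p2, p3, p4, p5, p6, p7, p8⟩ :=
        round_sorted w2 w1 w3 h2 h2' h1 h1' h3 h3' a b
      exact ⟨x1, x2, x3, e1, e2, e3, by linarith, by linarith, by linarith, by linarith,
        by linarith, by linarith, by linarith, by linarith⟩
    · rcases le_total w3 w2 with c | c
      · obtain ⟨x2, x3, x1, e2, e3, e1, p1, p2, p3, p4, p5, p6, p7, p8⟩ :=
          round_sorted w2 w3 w1 h2 h2' h3 h3' h1 h1' c b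
        exact ⟨x1, x2, x3, e1, e2, e3, by linarith, by linarith, by linarith, by linarith,
          by linarith, by linarith, by linarith, by linarith⟩
      · obtain ⟨x3, x2, x1, e3, e2, e1, p1, p2, p3, p4, p5, p6, p7, p8⟩ :=
          round_sorted w3 w2 w1 h3 h3' h2 h2' h1 h1' c a
        exact ⟨x1, x2, x3, e1, e2, e3, by linarith, by linarith, by linarith, by linarith,
          by linarith, by linarith, by linarith, by linarith⟩

/-- Sign-general version. -/
lemma round_gen (s w1 w2 w3 : ℝ) (hs : s = 1 ∨ s = -1)
    (h1 : 0 ≤ w1) (h1' : w1 ≤ 1) (h2 : 0 ≤ w2) (h2' : w2 ≤ 1)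
    (h3 : 0 ≤ w3) (h3' : w3 ≤ 1) :
    ∃ x1 x2 x3 : ℝ, (x1 = 0 ∨ x1 = 1) ∧ (x2 = 0 ∨ x2 = 1) ∧ (x3 = 0 ∨ x3 = 1) ∧
      -(4/3) ≤ (w1-x1)+(w2-x2)-(w3-x3) ∧ (w1-x1)+(w2-x2)-(w3-x3) ≤ 4/3 ∧
      -(4/3) ≤ (w1-x1)-(w2-x2)+(w3-x3) ∧ (w1-x1)-(w2-x2)+(w3-x3) ≤ 4/3 ∧
      -(4/3) ≤ -(w1-x1)+(w2-x2)+(w3-x3) ∧ -(w1-x1)+(w2-x2)+(w3-x3) ≤ 4/3 ∧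
      -2 ≤ s*((w1-x1)+(w2-x2)+(w3-x3)) ∧ s*((w1-x1)+(w2-x2)+(w3-x3)) ≤ 0 := by
  rcases hs with rfl | rfl
  · obtain ⟨x1, x2, x3, e1, e2, e3, p1, p2, p3, p4, p5, p6, p7, p8⟩ :=
      round_any w1 w2 w3 h1 h1' h2 h2' h3 h3'
    exact ⟨x1, x2, x3, e1, e2, e3, p1, p2, p3, p4, p5, p6, by linarith, by linarith⟩
  · obtain ⟨x1, x2, x3, e1, e2, e3, p1, p2, p3, p4, p5, p6, p7, p8⟩ :=
      round_any (1-w1) (1-w2) (1-w3) (by linarith) (by linarith) (by linarith) (by linarith)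
        (by linarith) (by linarith)
    refine ⟨1-x1, 1-x2, 1-x3, ?_, ?_, ?_, by linarith, by linarith, by linarith, by linarith,
      by linarith, by linarith, by linarith, by linarith⟩
    · rcases e1 with h | h <;> [right; left] <;> rw [h] <;> ring
    · rcases e2 with h | h <;> [right; left] <;> rw [h] <;> ring
    · rcases e3 with h | h <;> [right; left] <;> rw [h] <;> ring

/-- Combination bound for clause rows. -/
lemma combo3 (e1 e2 e3 v1 v2 v3 : ℝ) (he1 : e1 = -1 ∨ e1 = 1) (he2 : e2 = -1 ∨ e2 = 1)
    (he3 : e3 = -1 ∨ e3 = 1) (hs1 : -1 ≤ e1+e2+e3) (hs2 : e1+e2+e3 ≤ 1)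
    (hv1 : -2 ≤ v1) (hv1' : v1 ≤ 0) (hv2 : -2 ≤ v2) (hv2' : v2 ≤ 0)
    (hv3 : -2 ≤ v3) (hv3' : v3 ≤ 0) :
    -4 ≤ e1*v1+e2*v2+e3*v3 ∧ e1*v1+e2*v2+e3*v3 ≤ 4 := by
  rcases he1 with rfl | rfl <;> rcases he2 with rfl | rfl <;> rcases he3 with rfl | rfl <;>
    constructor <;> linarith

/-- Sum of three ±1/2's exceeding 1/2 in absolute value is at least 3/2. -/
lemma half3 (t1 t2 t3 : ℝ) (h1 : t1 = -(1/2) ∨ t1 = 1/2) (h2 : t2 = -(1/2) ∨ t2 = 1/2)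
    (h3 : t3 = -(1/2) ∨ t3 = 1/2) (h : 1/2 < |t1+t2+t3|) : 3/2 ≤ |t1+t2+t3| := by
  rw [lt_abs] at h
  rw [le_abs]
  rcases h1 with rfl | rfl <;> rcases h2 with rfl | rfl <;> rcases h3 with rfl | rfl <;>
    rcases h with h | h <;>
    first | exact Or.inl (by linarith) | exact Or.inr (by linarith)

/-- Three ±1/2's, either all equal or one signed combination is 3/2 in absolute value. -/
lemma notall3 (d1 d2 d3 : ℝ) (h1 : d1 = -(1/2) ∨ d1 = 1/2) (h2 : d2 = -(1/2) ∨ d2 = 1/2)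
    (h3 : d3 = -(1/2) ∨ d3 = 1/2) :
    (d1 = d2 ∧ d1 = d3) ∨ 3/2 ≤ |d1+d2-d3| ∨ 3/2 ≤ |d1-d2+d3| ∨ 3/2 ≤ |-d1+d2+d3| := by
  rcases h1 with rfl | rfl <;> rcases h2 with rfl | rfl <;> rcases h3 with rfl | rfl <;>
    first
      | exact Or.inl ⟨rfl, rfl⟩
      | (refine Or.inr (Or.inl (le_abs.mpr (Or.inl ?_))); norm_num; done)
      | (refine Or.inr (Or.inl (le_abs.mpr (Or.inr ?_))); norm_num; done)
      | (refine Or.inr (Or.inr (Or.inl (le_abs.mpr (Or.inl ?_)))); norm_num; done)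
      | (refine Or.inr (Or.inr (Or.inl (le_abs.mpr (Or.inr ?_)))); norm_num; done)
      | (refine Or.inr (Or.inr (Or.inr (le_abs.mpr (Or.inl ?_)))); norm_num; done)
      | (refine Or.inr (Or.inr (Or.inr (le_abs.mpr (Or.inr ?_)))); norm_num)

variable {m n : ℕ} (B : Matrix (Fin m) (Fin n) ℝ)

lemma Amat_mulVec_inl (d : (Fin n ⊕ Fin n ⊕ Fin n) → ℝ) (j : Fin m) :
    (Amat B).mulVec d (Sum.inl j)
      = (1/3) * B.mulVec (fun i => d (Sum.inl i) + d (Sum.inr (Sum.inl i))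
          + d (Sum.inr (Sum.inr i))) j := by
  simp only [Amat, Matrix.mulVec, dotProduct, Matrix.of_apply, Fintype.sum_sum_type,
    Sum.elim_inl, Sum.elim_inr, id_eq, mul_add, Finset.sum_add_distrib, Finset.mul_sum]
  simp only [← mul_assoc]
  ring

lemma Amat_mulVec_r1 (d : (Fin n ⊕ Fin n ⊕ Fin n) → ℝ) (k : Fin n) :
    (Amat B).mulVec d (Sum.inr (Sum.inl k))
      = d (Sum.inl k) + d (Sum.inr (Sum.inl k)) - d (Sum.inr (Sum.inr k)) := by
  simp [Amat, Matrix.mulVec, dotProduct, Fintype.sum_sum_type, ite_mul,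
    Finset.sum_ite_eq, sub_eq_add_neg]
  ring

lemma Amat_mulVec_r2 (d : (Fin n ⊕ Fin n ⊕ Fin n) → ℝ) (k : Fin n) :
    (Amat B).mulVec d (Sum.inr (Sum.inr (Sum.inl k)))
      = d (Sum.inl k) - d (Sum.inr (Sum.inl k)) + d (Sum.inr (Sum.inr k)) := by
  simp [Amat, Matrix.mulVec, dotProduct, Fintype.sum_sum_type, ite_mul,
    Finset.sum_ite_eq, sub_eq_add_neg]
  ring

lemma Amat_mulVec_r3 (d : (Fin n ⊕ Fin n ⊕ Fin n) → ℝ) (k : Fin n) :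
    (Amat B).mulVec d (Sum.inr (Sum.inr (Sum.inr k)))
      = -d (Sum.inl k) + d (Sum.inr (Sum.inl k)) + d (Sum.inr (Sum.inr k)) := by
  simp [Amat, Matrix.mulVec, dotProduct, Fintype.sum_sum_type, ite_mul,
    Finset.sum_ite_eq, sub_eq_add_neg]
  ring

end Aux

/-- The NP-hardness gap: `lindisc(A) ≤ 4/3` when `B` is NAE-satisfiable, and
`lindisc(A) ≥ 3/2` when it is not. -/
theorem reduction_gap {m n : ℕ} (B : Matrix (Fin m) (Fin n) ℝ)
    (hB : IsNAEClauseMatrix B) :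
    ((∃ ψ : Fin n → ℝ, NAESatisfies B ψ) → lindisc (Amat B) ≤ 4 / 3) ∧
    ((¬ ∃ ψ : Fin n → ℝ, NAESatisfies B ψ) → 3 / 2 ≤ lindisc (Amat B)) := by
  obtain ⟨i1, i2, i3, b1, b2, b3, hb, hBf⟩ := hB
  have hBrow : ∀ (j : Fin m) (v : Fin n → ℝ),
      B.mulVec v j = b1 j * v (i1 j) + b2 j * v (i2 j) + b3 j * v (i3 j) := by
    intro j v
    simp only [Matrix.mulVec, dotProduct]
    rw [Finset.sum_congr rfl (fun i _ => by rw [hBf j i])]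
    simp [add_mul, ite_mul, Finset.sum_add_distrib, Finset.sum_ite_eq]
  haveI hwne : Nonempty {w : (Fin n ⊕ Fin n ⊕ Fin n) → ℝ // ∀ j, w j ∈ Set.Icc (0:ℝ) 1} :=
    ⟨⟨fun _ => 0, fun _ => ⟨le_refl 0, zero_le_one⟩⟩⟩
  haveI hxne : Nonempty {x : (Fin n ⊕ Fin n ⊕ Fin n) → ℝ // ∀ j, x j = 0 ∨ x j = 1} :=
    ⟨⟨fun _ => 0, fun _ => Or.inl rfl⟩⟩
  have hbddB : ∀ w : {w : (Fin n ⊕ Fin n ⊕ Fin n) → ℝ // ∀ j, w j ∈ Set.Icc (0:ℝ) 1},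
      BddBelow (Set.range fun x : {x : (Fin n ⊕ Fin n ⊕ Fin n) → ℝ // ∀ j, x j = 0 ∨ x j = 1} =>
        ‖(Amat B).mulVec (w.1 - x.1)‖) := by
    intro w
    refine ⟨0, ?_⟩
    rintro r ⟨x, rfl⟩
    exact norm_nonneg _
  constructor
  · rintro ⟨ψ, hψ01, hψn⟩
    unfold lindisc
    apply ciSup_le
    intro w
    obtain ⟨σ, hσdef⟩ : ∃ σ : Fin n → ℝ, σ = fun i => 1 - 2 * ψ i := ⟨_, rfl⟩
    have hσ : ∀ i, σ i = 1 ∨ σ i = -1 := by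
      intro i
      rcases hψ01 i with h | h
      · left; simp [hσdef, h]
      · right; simp [hσdef, h]; ring
    have key : ∀ i : Fin n, ∃ x1 x2 x3 : ℝ,
        (x1 = 0 ∨ x1 = 1) ∧ (x2 = 0 ∨ x2 = 1) ∧ (x3 = 0 ∨ x3 = 1) ∧
        -(4/3) ≤ (w.1 (Sum.inl i)-x1)+(w.1 (Sum.inr (Sum.inl i))-x2)-(w.1 (Sum.inr (Sum.inr i))-x3) ∧
        (w.1 (Sum.inl i)-x1)+(w.1 (Sum.inr (Sum.inl i))-x2)-(w.1 (Sum.inr (Sum.inr i))-x3) ≤ 4/3 ∧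
        -(4/3) ≤ (w.1 (Sum.inl i)-x1)-(w.1 (Sum.inr (Sum.inl i))-x2)+(w.1 (Sum.inr (Sum.inr i))-x3) ∧
        (w.1 (Sum.inl i)-x1)-(w.1 (Sum.inr (Sum.inl i))-x2)+(w.1 (Sum.inr (Sum.inr i))-x3) ≤ 4/3 ∧
        -(4/3) ≤ -(w.1 (Sum.inl i)-x1)+(w.1 (Sum.inr (Sum.inl i))-x2)+(w.1 (Sum.inr (Sum.inr i))-x3) ∧
        -(w.1 (Sum.inl i)-x1)+(w.1 (Sum.inr (Sum.inl i))-x2)+(w.1 (Sum.inr (Sum.inr i))-x3) ≤ 4/3 ∧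
        -2 ≤ σ i*((w.1 (Sum.inl i)-x1)+(w.1 (Sum.inr (Sum.inl i))-x2)+(w.1 (Sum.inr (Sum.inr i))-x3)) ∧
        σ i*((w.1 (Sum.inl i)-x1)+(w.1 (Sum.inr (Sum.inl i))-x2)+(w.1 (Sum.inr (Sum.inr i))-x3)) ≤ 0 :=
      fun i => round_gen (σ i) _ _ _ (hσ i)
        (w.2 (Sum.inl i)).1 (w.2 (Sum.inl i)).2
        (w.2 (Sum.inr (Sum.inl i))).1 (w.2 (Sum.inr (Sum.inl i))).2
        (w.2 (Sum.inr (Sum.inr i))).1 (w.2 (Sum.inr (Sum.inr i))).2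
    choose X1 X2 X3 e1 e2 e3 p1 p2 p3 p4 p5 p6 p7 p8 using key
    obtain ⟨xv, hxvdef⟩ : ∃ xv : (Fin n ⊕ Fin n ⊕ Fin n) → ℝ,
        xv = Sum.elim X1 (Sum.elim X2 X3) := ⟨_, rfl⟩
    have hxv01 : ∀ c, xv c = 0 ∨ xv c = 1 := by
      rintro (i | i | i) <;> rw [hxvdef] <;> first | exact e1 i | exact e2 i | exact e3 i
    refine ciInf_le_of_le (hbddB w) ⟨xv, hxv01⟩ ?_
    have hdc : ∀ i : Fin n, (w.1 - xv) (Sum.inl i) = w.1 (Sum.inl i) - X1 i ∧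
        (w.1 - xv) (Sum.inr (Sum.inl i)) = w.1 (Sum.inr (Sum.inl i)) - X2 i ∧
        (w.1 - xv) (Sum.inr (Sum.inr i)) = w.1 (Sum.inr (Sum.inr i)) - X3 i := by
      intro i
      refine ⟨?_, ?_, ?_⟩ <;> simp [hxvdef]
    rw [pi_norm_le_iff_of_nonneg (by norm_num : (0:ℝ) ≤ 4/3)]
    rintro (j | k | k | k)
    · -- clause row
      rw [Real.norm_eq_abs, Amat_mulVec_inl B _ j,
        hBrow j (fun i => (w.1 - xv) (Sum.inl i) + (w.1 - xv) (Sum.inr (Sum.inl i))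
          + (w.1 - xv) (Sum.inr (Sum.inr i)))]
      obtain ⟨u, hudef⟩ : ∃ u : Fin n → ℝ, ∀ i, u i = (w.1 - xv) (Sum.inl i)
          + (w.1 - xv) (Sum.inr (Sum.inl i)) + (w.1 - xv) (Sum.inr (Sum.inr i)) :=
        ⟨_, fun _ => rfl⟩
      rw [← hudef (i1 j), ← hudef (i2 j), ← hudef (i3 j)]
      have hσsq : ∀ i, σ i * σ i = 1 := by
        intro i; rcases hσ i with h | h <;> rw [h] <;> norm_num
      have hvb : ∀ i, -2 ≤ σ i * u i ∧ σ i * u i ≤ 0 := by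
        intro i
        obtain ⟨q1, q2, q3⟩ := hdc i
        constructor
        · have := p7 i; rw [hudef i]; simp only [q1, q2, q3]; linarith
        · have := p8 i; rw [hudef i]; simp only [q1, q2, q3]; linarith
      have hε : ∀ (b : ℝ), (b = -1 ∨ b = 1) → ∀ i, (b * σ i = -1 ∨ b * σ i = 1) := by
        intro b hbb i
        rcases hbb with h | h <;> rcases hσ i with h' | h' <;> rw [h, h'] <;> norm_num
      have hent : |B.mulVec ((fun _ => (1:ℝ)/2) - ψ) j| ≤ 1/2 := by
        have h1 := norm_le_pi_norm (B.mulVec ((fun _ => (1:ℝ)/2) - ψ)) j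
        rw [Real.norm_eq_abs] at h1
        exact h1.trans hψn
      have hrow : B.mulVec ((fun _ => (1:ℝ)/2) - ψ) j
          = (b1 j * σ (i1 j) + b2 j * σ (i2 j) + b3 j * σ (i3 j)) / 2 := by
        rw [hBrow]
        simp only [Pi.sub_apply, hσdef]
        ring
      rw [hrow] at hent
      obtain ⟨hs1, hs2⟩ := abs_le.mp hent
      obtain ⟨hc1, hc2⟩ := combo3 (b1 j * σ (i1 j)) (b2 j * σ (i2 j)) (b3 j * σ (i3 j))
        (σ (i1 j) * u (i1 j)) (σ (i2 j) * u (i2 j)) (σ (i3 j) * u (i3 j))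
        (hε _ (hb j).1 _) (hε _ (hb j).2.1 _) (hε _ (hb j).2.2 _)
        (by linarith) (by linarith)
        (hvb (i1 j)).1 (hvb (i1 j)).2 (hvb (i2 j)).1 (hvb (i2 j)).2
        (hvb (i3 j)).1 (hvb (i3 j)).2
      have hq1 : b1 j * u (i1 j) = (b1 j * σ (i1 j)) * (σ (i1 j) * u (i1 j)) := by
        linear_combination (-(b1 j * u (i1 j))) * hσsq (i1 j)
      have hq2 : b2 j * u (i2 j) = (b2 j * σ (i2 j)) * (σ (i2 j) * u (i2 j)) := by
        linear_combination (-(b2 j * u (i2 j))) * hσsq (i2 j)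
      have hq3 : b3 j * u (i3 j) = (b3 j * σ (i3 j)) * (σ (i3 j) * u (i3 j)) := by
        linear_combination (-(b3 j * u (i3 j))) * hσsq (i3 j)
      rw [abs_le]
      constructor
      · rw [hq1, hq2, hq3]; linarith
      · rw [hq1, hq2, hq3]; linarith
    · rw [Real.norm_eq_abs, Amat_mulVec_r1 B _ k, abs_le]
      obtain ⟨q1, q2, q3⟩ := hdc k
      rw [q1, q2, q3]
      exact ⟨p1 k, p2 k⟩
    · rw [Real.norm_eq_abs, Amat_mulVec_r2 B _ k, abs_le]
      obtain ⟨q1, q2, q3⟩ := hdc k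
      rw [q1, q2, q3]
      exact ⟨p3 k, p4 k⟩
    · rw [Real.norm_eq_abs, Amat_mulVec_r3 B _ k, abs_le]
      obtain ⟨q1, q2, q3⟩ := hdc k
      rw [q1, q2, q3]
      exact ⟨p5 k, p6 k⟩
  · intro hunsat
    unfold lindisc
    have hbdd : BddAbove (Set.range fun w : {w : (Fin n ⊕ Fin n ⊕ Fin n) → ℝ //
        ∀ j, w j ∈ Set.Icc (0:ℝ) 1} =>
        ⨅ x : {x : (Fin n ⊕ Fin n ⊕ Fin n) → ℝ // ∀ j, x j = 0 ∨ x j = 1},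
          ‖(Amat B).mulVec (w.1 - x.1)‖) := by
      refine ⟨∑ r, ∑ c, |Amat B r c|, ?_⟩
      rintro r ⟨w, rfl⟩
      refine ciInf_le_of_le (hbddB w) ⟨fun _ => 0, fun _ => Or.inl rfl⟩ ?_
      rw [pi_norm_le_iff_of_nonneg (by positivity)]
      intro r'
      rw [Real.norm_eq_abs]
      have h1 : (Amat B).mulVec (w.1 - fun _ => 0) r' = ∑ c, Amat B r' c * w.1 c := by
        simp [Matrix.mulVec, dotProduct]
      rw [h1]
      calc |∑ c, Amat B r' c * w.1 c| ≤ ∑ c, |Amat B r' c * w.1 c| :=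
            Finset.abs_sum_le_sum_abs _ _
        _ ≤ ∑ c, |Amat B r' c| := by
            refine Finset.sum_le_sum fun c _ => ?_
            rw [abs_mul]
            exact mul_le_of_le_one_right (abs_nonneg _)
              (abs_le.mpr ⟨by linarith [(w.2 c).1], (w.2 c).2⟩)
        _ ≤ ∑ r, ∑ c, |Amat B r c| :=
            Finset.single_le_sum (f := fun r => ∑ c, |Amat B r c|)
              (fun r _ => Finset.sum_nonneg fun c _ => abs_nonneg _) (Finset.mem_univ r')
    refine le_ciSup_of_le hbdd ⟨fun _ => 1/2, fun _ => ⟨by norm_num, by norm_num⟩⟩ ?_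
    refine le_ciInf ?_
    intro x
    obtain ⟨d, hddef⟩ : ∃ d : (Fin n ⊕ Fin n ⊕ Fin n) → ℝ, d = fun c => 1/2 - x.1 c := ⟨_, rfl⟩
    have hwx : ((⟨fun _ => 1/2, fun _ => ⟨by norm_num, by norm_num⟩⟩ :
        {w : (Fin n ⊕ Fin n ⊕ Fin n) → ℝ // ∀ j, w j ∈ Set.Icc (0:ℝ) 1}).1 - x.1) = d := by
      funext c
      simp [hddef]
    rw [hwx]
    have hd : ∀ c, d c = -(1/2) ∨ d c = 1/2 := by
      intro c
      rcases x.2 c with h | h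
      · right; rw [hddef]; simp [h]
      · left; rw [hddef]; simp [h]; norm_num
    by_cases hall : ∀ i : Fin n, d (Sum.inl i) = d (Sum.inr (Sum.inl i)) ∧
        d (Sum.inl i) = d (Sum.inr (Sum.inr i))
    · obtain ⟨ψ, hψdef⟩ : ∃ ψ : Fin n → ℝ, ψ = fun i => x.1 (Sum.inl i) := ⟨_, rfl⟩
      have hψ01 : ∀ i, ψ i = 0 ∨ ψ i = 1 := fun i => by rw [hψdef]; exact x.2 (Sum.inl i)
      have hns : ¬ NAESatisfies B ψ := fun h => hunsat ⟨ψ, h⟩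
      rw [NAESatisfies] at hns
      push_neg at hns
      have hn2 := hns hψ01
      have hvec : ((fun _ => (1:ℝ)/2) - ψ) = fun i => d (Sum.inl i) := by
        funext i; rw [hψdef, hddef]; simp
      obtain ⟨j, hj⟩ : ∃ j, 1/2 < |B.mulVec (fun i => d (Sum.inl i)) j| := by
        by_contra hc
        push_neg at hc
        refine absurd ?_ (not_le.mpr hn2)
        rw [hvec]
        exact (pi_norm_le_iff_of_nonneg (by norm_num)).mpr fun j => by
          rw [Real.norm_eq_abs]; exact hc j
      have htk : ∀ (b : ℝ), (b = -1 ∨ b = 1) → ∀ c : Fin n,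
          (b * d (Sum.inl c) = -(1/2) ∨ b * d (Sum.inl c) = 1/2) := by
        intro b hbb c
        rcases hbb with h | h <;> rcases hd (Sum.inl c) with h' | h' <;> rw [h, h'] <;> norm_num
      have hval : B.mulVec (fun i => d (Sum.inl i)) j
          = b1 j * d (Sum.inl (i1 j)) + b2 j * d (Sum.inl (i2 j)) + b3 j * d (Sum.inl (i3 j)) :=
        hBrow j _
      rw [hval] at hj
      have h32 := half3 _ _ _ (htk _ (hb j).1 (i1 j)) (htk _ (hb j).2.1 (i2 j))
        (htk _ (hb j).2.2 (i3 j)) hj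
      have hAval : (Amat B).mulVec d (Sum.inl j)
          = b1 j * d (Sum.inl (i1 j)) + b2 j * d (Sum.inl (i2 j)) + b3 j * d (Sum.inl (i3 j)) := by
        rw [Amat_mulVec_inl B d j, hBrow j _]
        have e1 := (hall (i1 j)).1
        have e1' := (hall (i1 j)).2
        have e2 := (hall (i2 j)).1
        have e2' := (hall (i2 j)).2
        have e3 := (hall (i3 j)).1
        have e3' := (hall (i3 j)).2
        rw [← e1, ← e1', ← e2, ← e2', ← e3, ← e3']
        ring
      calc (3:ℝ)/2 ≤ |b1 j * d (Sum.inl (i1 j)) + b2 j * d (Sum.inl (i2 j))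
            + b3 j * d (Sum.inl (i3 j))| := h32
        _ = ‖(Amat B).mulVec d (Sum.inl j)‖ := by rw [Real.norm_eq_abs, hAval]
        _ ≤ ‖(Amat B).mulVec d‖ := norm_le_pi_norm _ _
    · push_neg at hall
      obtain ⟨i, hi⟩ := hall
      rcases notall3 _ _ _ (hd (Sum.inl i)) (hd (Sum.inr (Sum.inl i))) (hd (Sum.inr (Sum.inr i)))
        with h | h | h | h
      · exact absurd h.2 (hi h.1)
      · calc (3:ℝ)/2 ≤ |d (Sum.inl i) + d (Sum.inr (Sum.inl i)) - d (Sum.inr (Sum.inr i))| := h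
          _ = ‖(Amat B).mulVec d (Sum.inr (Sum.inl i))‖ := by
              rw [Real.norm_eq_abs, Amat_mulVec_r1]
          _ ≤ ‖(Amat B).mulVec d‖ := norm_le_pi_norm _ _
      · calc (3:ℝ)/2 ≤ |d (Sum.inl i) - d (Sum.inr (Sum.inl i)) + d (Sum.inr (Sum.inr i))| := h
          _ = ‖(Amat B).mulVec d (Sum.inr (Sum.inr (Sum.inl i)))‖ := by
              rw [Real.norm_eq_abs, Amat_mulVec_r2]
          _ ≤ ‖(Amat B).mulVec d‖ := norm_le_pi_norm _ _
      · calc (3:ℝ)/2 ≤ |-d (Sum.inl i) + d (Sum.inr (Sum.inl i)) + d (Sum.inr (Sum.inr i))| := h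
          _ = ‖(Amat B).mulVec d (Sum.inr (Sum.inr (Sum.inr i)))‖ := by
              rw [Real.norm_eq_abs, Amat_mulVec_r3]
          _ ≤ ‖(Amat B).mulVec d‖ := norm_le_pi_norm _ _
end

section
/- Let B ∈ ℝ^{m×n} be a NAE3SAT clause matrix, let n' ≤ n, and let A' ∈ ℝ^{(m+3n+2n')×(3n+n')} be the block matrix whose first m+3n rows are [A | 0], where A has blocks [⅓B ⅓B ⅓B], [I_n I_n −I_n], [I_n −I_n I_n], [−I_n I_n I_n] from top to bottom; whose next n' rows are [⅔I_{n'} 0 | ⅔I_{n'} 0 | ⅔I_{n'} 0 | −2I_{n'}]; and whose last n' rows are [0_{n'×3n} | (8/3)I_{n'}]. Suppose that for every ψ_A ∈ {0,1}^{n'} there exists ψ ∈ {0,1}ⁿ with ψᵢ = (ψ_A)ᵢ for all i ∈ [n'] such that ψ NAE-satisfies B. Then lindisc(A') ≤ 4/3; that is, for every w ∈ [0,1]^{3n+n'} there exists x ∈ {0,1}^{3n+n'} with ‖A'(w − x)‖_∞ ≤ 4/3. -/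
/-- The extended block matrix `A'` used in the `Π₂`-hardness reduction. -/
noncomputable def A'mat {m n n' : ℕ} (h : n' ≤ n) (B : Matrix (Fin m) (Fin n) ℝ) :
    Matrix ((Fin m ⊕ (Fin n ⊕ Fin n ⊕ Fin n)) ⊕ (Fin n' ⊕ Fin n'))
      ((Fin n ⊕ Fin n ⊕ Fin n) ⊕ Fin n') ℝ :=
  Matrix.of fun r c =>
    match r, c with
    | Sum.inl r, Sum.inl c => Amat B r c
    | Sum.inl _, Sum.inr _ => 0
    | Sum.inr (Sum.inl k), Sum.inl c =>
        Sum.elim (fun i => if Fin.castLE h k = i then (2 : ℝ) / 3 else 0)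
          (Sum.elim (fun i => if Fin.castLE h k = i then (2 : ℝ) / 3 else 0)
            (fun i => if Fin.castLE h k = i then (2 : ℝ) / 3 else 0)) c
    | Sum.inr (Sum.inl k), Sum.inr k' => if k = k' then -2 else 0
    | Sum.inr (Sum.inr _), Sum.inl _ => 0
    | Sum.inr (Sum.inr k), Sum.inr k' => if k = k' then 8 / 3 else 0

private lemma sorted01 (a b c : ℝ) (ha0 : 0 ≤ a) (hc1 : c ≤ 1)
    (hab : a ≤ b) (hbc : b ≤ c) :
    ∃ x1 x2 x3 : ℝ, (x1 = 0 ∨ x1 = 1) ∧ (x2 = 0 ∨ x2 = 1) ∧ (x3 = 0 ∨ x3 = 1) ∧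
      (-(4/3) ≤ ((a-x1)+(b-x2)+(c-x3)) - 2*(a-x1)) ∧
      (((a-x1)+(b-x2)+(c-x3)) - 2*(a-x1) ≤ 4/3) ∧
      (-(4/3) ≤ ((a-x1)+(b-x2)+(c-x3)) - 2*(b-x2)) ∧
      (((a-x1)+(b-x2)+(c-x3)) - 2*(b-x2) ≤ 4/3) ∧
      (-(4/3) ≤ ((a-x1)+(b-x2)+(c-x3)) - 2*(c-x3)) ∧
      (((a-x1)+(b-x2)+(c-x3)) - 2*(c-x3) ≤ 4/3) ∧
      (0 ≤ (a-x1)+(b-x2)+(c-x3)) ∧ ((a-x1)+(b-x2)+(c-x3) ≤ 2) := by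
  rcases le_or_gt (a+b+c) 2 with h2 | h2
  · rcases le_or_gt (b + c - a) (4/3) with h4 | h4
    · refine ⟨0, 0, 0, Or.inl rfl, Or.inl rfl, Or.inl rfl, ?_, ?_, ?_, ?_, ?_, ?_, ?_, ?_⟩ <;>
        linarith
    · refine ⟨0, 0, 1, Or.inl rfl, Or.inl rfl, Or.inr rfl, ?_, ?_, ?_, ?_, ?_, ?_, ?_, ?_⟩ <;>
        linarith
  · refine ⟨0, 1, 1, Or.inl rfl, Or.inr rfl, Or.inr rfl, ?_, ?_, ?_, ?_, ?_, ?_, ?_, ?_⟩ <;>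
      linarith

set_option maxHeartbeats 1000000 in
private lemma coord0 (a b c : ℝ) (ha0 : 0 ≤ a) (ha1 : a ≤ 1) (hb0 : 0 ≤ b) (hb1 : b ≤ 1)
    (hc0 : 0 ≤ c) (hc1 : c ≤ 1) :
    ∃ x1 x2 x3 : ℝ, (x1 = 0 ∨ x1 = 1) ∧ (x2 = 0 ∨ x2 = 1) ∧ (x3 = 0 ∨ x3 = 1) ∧
      (-(4/3) ≤ ((a-x1)+(b-x2)+(c-x3)) - 2*(a-x1)) ∧
      (((a-x1)+(b-x2)+(c-x3)) - 2*(a-x1) ≤ 4/3) ∧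
      (-(4/3) ≤ ((a-x1)+(b-x2)+(c-x3)) - 2*(b-x2)) ∧
      (((a-x1)+(b-x2)+(c-x3)) - 2*(b-x2) ≤ 4/3) ∧
      (-(4/3) ≤ ((a-x1)+(b-x2)+(c-x3)) - 2*(c-x3)) ∧
      (((a-x1)+(b-x2)+(c-x3)) - 2*(c-x3) ≤ 4/3) ∧
      (0 ≤ (a-x1)+(b-x2)+(c-x3)) ∧ ((a-x1)+(b-x2)+(c-x3) ≤ 2) := by
  rcases le_total a b with hab | hab <;> rcases le_total b c with hbc | hbc <;>
    rcases le_total a c with hac | hac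
  · obtain ⟨y1,y2,y3,o1,o2,o3,p1,p2,p3,p4,p5,p6,p7,p8⟩ := sorted01 a b c ha0 hc1 hab hbc
    refine ⟨y1,y2,y3,o1,o2,o3,?_,?_,?_,?_,?_,?_,?_,?_⟩ <;> linarith
  · obtain ⟨y1,y2,y3,o1,o2,o3,p1,p2,p3,p4,p5,p6,p7,p8⟩ := sorted01 a b c ha0 hc1 hab hbc
    refine ⟨y1,y2,y3,o1,o2,o3,?_,?_,?_,?_,?_,?_,?_,?_⟩ <;> linarith
  · obtain ⟨y1,y2,y3,o1,o2,o3,p1,p2,p3,p4,p5,p6,p7,p8⟩ := sorted01 a c b ha0 hb1 hac hbc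
    refine ⟨y1,y3,y2,o1,o3,o2,?_,?_,?_,?_,?_,?_,?_,?_⟩ <;> linarith
  · obtain ⟨y1,y2,y3,o1,o2,o3,p1,p2,p3,p4,p5,p6,p7,p8⟩ := sorted01 c a b hc0 hb1 hac hab
    refine ⟨y2,y3,y1,o2,o3,o1,?_,?_,?_,?_,?_,?_,?_,?_⟩ <;> linarith
  · obtain ⟨y1,y2,y3,o1,o2,o3,p1,p2,p3,p4,p5,p6,p7,p8⟩ := sorted01 b a c hb0 hc1 hab hac
    refine ⟨y2,y1,y3,o2,o1,o3,?_,?_,?_,?_,?_,?_,?_,?_⟩ <;> linarith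
  · obtain ⟨y1,y2,y3,o1,o2,o3,p1,p2,p3,p4,p5,p6,p7,p8⟩ := sorted01 b c a hb0 ha1 hbc hac
    refine ⟨y3,y1,y2,o3,o1,o2,?_,?_,?_,?_,?_,?_,?_,?_⟩ <;> linarith
  · obtain ⟨y1,y2,y3,o1,o2,o3,p1,p2,p3,p4,p5,p6,p7,p8⟩ := sorted01 c b a hc0 ha1 hbc hab
    refine ⟨y3,y2,y1,o3,o2,o1,?_,?_,?_,?_,?_,?_,?_,?_⟩ <;> linarith
  · obtain ⟨y1,y2,y3,o1,o2,o3,p1,p2,p3,p4,p5,p6,p7,p8⟩ := sorted01 c b a hc0 ha1 hbc hab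
    refine ⟨y3,y2,y1,o3,o2,o1,?_,?_,?_,?_,?_,?_,?_,?_⟩ <;> linarith

private lemma coordPsi (a b c ψ : ℝ) (ha0 : 0 ≤ a) (ha1 : a ≤ 1) (hb0 : 0 ≤ b) (hb1 : b ≤ 1)
    (hc0 : 0 ≤ c) (hc1 : c ≤ 1) (hψ : ψ = 0 ∨ ψ = 1) :
    ∃ x1 x2 x3 : ℝ, (x1 = 0 ∨ x1 = 1) ∧ (x2 = 0 ∨ x2 = 1) ∧ (x3 = 0 ∨ x3 = 1) ∧
      (-(4/3) ≤ ((a-x1)+(b-x2)+(c-x3)) - 2*(a-x1)) ∧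
      (((a-x1)+(b-x2)+(c-x3)) - 2*(a-x1) ≤ 4/3) ∧
      (-(4/3) ≤ ((a-x1)+(b-x2)+(c-x3)) - 2*(b-x2)) ∧
      (((a-x1)+(b-x2)+(c-x3)) - 2*(b-x2) ≤ 4/3) ∧
      (-(4/3) ≤ ((a-x1)+(b-x2)+(c-x3)) - 2*(c-x3)) ∧
      (((a-x1)+(b-x2)+(c-x3)) - 2*(c-x3) ≤ 4/3) ∧
      (0 ≤ ((a-x1)+(b-x2)+(c-x3)) + 2*ψ) ∧ (((a-x1)+(b-x2)+(c-x3)) + 2*ψ ≤ 2) := by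
  rcases hψ with hψ | hψ
  · obtain ⟨y1,y2,y3,o1,o2,o3,p1,p2,p3,p4,p5,p6,p7,p8⟩ :=
      coord0 a b c ha0 ha1 hb0 hb1 hc0 hc1
    subst hψ
    exact ⟨y1,y2,y3,o1,o2,o3,p1,p2,p3,p4,p5,p6, by linarith, by linarith⟩
  · obtain ⟨y1,y2,y3,o1,o2,o3,p1,p2,p3,p4,p5,p6,p7,p8⟩ :=
      coord0 (1-a) (1-b) (1-c) (by linarith) (by linarith) (by linarith) (by linarith)
        (by linarith) (by linarith)
    subst hψ
    refine ⟨1-y1, 1-y2, 1-y3, ?_, ?_, ?_, by linarith, by linarith, by linarith, by linarith,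
      by linarith, by linarith, by linarith, by linarith⟩
    · rcases o1 with h' | h' <;> [right; left] <;> rw [h'] <;> norm_num
    · rcases o2 with h' | h' <;> [right; left] <;> rw [h'] <;> norm_num
    · rcases o3 with h' | h' <;> [right; left] <;> rw [h'] <;> norm_num

set_option maxHeartbeats 1600000 in
/-- Completeness of the `Π₂`-hardness reduction: if every assignment `ψ_A` to the first `n'`
variables extends to a NAE-satisfying assignment of `B`, then for every `w ∈ [0,1]^{3n+n'}`
there is `x ∈ {0,1}^{3n+n'}` with `‖A'(w-x)‖_∞ ≤ 4/3`. -/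
theorem pi2_reduction_completeness {m n n' : ℕ} (h : n' ≤ n)
    (B : Matrix (Fin m) (Fin n) ℝ) (hB : IsNAEClauseMatrix B)
    (hsat : ∀ ψA : Fin n' → ℝ, (∀ i, ψA i = 0 ∨ ψA i = 1) →
      ∃ ψ : Fin n → ℝ, (∀ i : Fin n', ψ (Fin.castLE h i) = ψA i) ∧ NAESatisfies B ψ) :
    ∀ w : ((Fin n ⊕ Fin n ⊕ Fin n) ⊕ Fin n') → ℝ, (∀ i, w i ∈ Set.Icc (0 : ℝ) 1) →
      ∃ x : ((Fin n ⊕ Fin n ⊕ Fin n) ⊕ Fin n') → ℝ, (∀ i, x i = 0 ∨ x i = 1) ∧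
        ‖(A'mat h B).mulVec (w - x)‖ ≤ 4 / 3 := by
  classical
  intro w hw
  set ψA : Fin n' → ℝ := fun k => if (1:ℝ)/2 ≤ w (Sum.inr k) then 1 else 0 with hψAdef
  have hψA01 : ∀ k, ψA k = 0 ∨ ψA k = 1 := by
    intro k
    by_cases h' : (1:ℝ)/2 ≤ w (Sum.inr k)
    · right; simp only [hψAdef]; rw [if_pos h']
    · left; simp only [hψAdef]; rw [if_neg h']
  obtain ⟨ψ, hext, hψ01, hψn⟩ := hsat ψA hψA01
  set φ : Fin n → ℝ := (fun _ => (1:ℝ)/2) - ψ with hφ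
  have key : ∀ i : Fin n, ∃ x1 x2 x3 : ℝ,
      (x1 = 0 ∨ x1 = 1) ∧ (x2 = 0 ∨ x2 = 1) ∧ (x3 = 0 ∨ x3 = 1) ∧
      (-(4/3) ≤ ((w (Sum.inl (Sum.inl i))-x1)+(w (Sum.inl (Sum.inr (Sum.inl i)))-x2)+
        (w (Sum.inl (Sum.inr (Sum.inr i)))-x3)) - 2*(w (Sum.inl (Sum.inl i))-x1)) ∧
      (((w (Sum.inl (Sum.inl i))-x1)+(w (Sum.inl (Sum.inr (Sum.inl i)))-x2)+
        (w (Sum.inl (Sum.inr (Sum.inr i)))-x3)) - 2*(w (Sum.inl (Sum.inl i))-x1) ≤ 4/3) ∧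
      (-(4/3) ≤ ((w (Sum.inl (Sum.inl i))-x1)+(w (Sum.inl (Sum.inr (Sum.inl i)))-x2)+
        (w (Sum.inl (Sum.inr (Sum.inr i)))-x3)) - 2*(w (Sum.inl (Sum.inr (Sum.inl i)))-x2)) ∧
      (((w (Sum.inl (Sum.inl i))-x1)+(w (Sum.inl (Sum.inr (Sum.inl i)))-x2)+
        (w (Sum.inl (Sum.inr (Sum.inr i)))-x3)) - 2*(w (Sum.inl (Sum.inr (Sum.inl i)))-x2) ≤ 4/3) ∧
      (-(4/3) ≤ ((w (Sum.inl (Sum.inl i))-x1)+(w (Sum.inl (Sum.inr (Sum.inl i)))-x2)+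
        (w (Sum.inl (Sum.inr (Sum.inr i)))-x3)) - 2*(w (Sum.inl (Sum.inr (Sum.inr i)))-x3)) ∧
      (((w (Sum.inl (Sum.inl i))-x1)+(w (Sum.inl (Sum.inr (Sum.inl i)))-x2)+
        (w (Sum.inl (Sum.inr (Sum.inr i)))-x3)) - 2*(w (Sum.inl (Sum.inr (Sum.inr i)))-x3) ≤ 4/3) ∧
      (0 ≤ ((w (Sum.inl (Sum.inl i))-x1)+(w (Sum.inl (Sum.inr (Sum.inl i)))-x2)+
        (w (Sum.inl (Sum.inr (Sum.inr i)))-x3)) + 2*(ψ i)) ∧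
      (((w (Sum.inl (Sum.inl i))-x1)+(w (Sum.inl (Sum.inr (Sum.inl i)))-x2)+
        (w (Sum.inl (Sum.inr (Sum.inr i)))-x3)) + 2*(ψ i) ≤ 2) :=
    fun i => coordPsi _ _ _ _ (hw _).1 (hw _).2 (hw _).1 (hw _).2 (hw _).1 (hw _).2 (hψ01 i)
  choose X1 X2 X3 hx1 hx2 hx3 q1 q2 q3 q4 q5 q6 q7 q8 using key
  refine ⟨Sum.elim (Sum.elim X1 (Sum.elim X2 X3)) ψA, ?_, ?_⟩
  · rintro ((i | i | i) | k)
    exacts [hx1 i, hx2 i, hx3 i, hψA01 k]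
  · rw [pi_norm_le_iff_of_nonneg (by norm_num : (0:ℝ) ≤ 4/3)]
    intro r
    rw [Real.norm_eq_abs]
    obtain ⟨i1, i2, i3, b1, b2, b3, hb, hBv⟩ := hB
    -- clause-row bound
    have hclause : ∀ j : Fin m,
        |∑ i, B j i * ((w (Sum.inl (Sum.inl i)) - X1 i) +
          (w (Sum.inl (Sum.inr (Sum.inl i))) - X2 i) +
          (w (Sum.inl (Sum.inr (Sum.inr i))) - X3 i))| ≤ 4 := by
      intro j
      have hBabs : ∑ i, |B j i| ≤ 3 := by
        have hle : ∀ i : Fin n, |B j i| ≤ (if i1 j = i then (1:ℝ) else 0) +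
            ((if i2 j = i then (1:ℝ) else 0) + (if i3 j = i then (1:ℝ) else 0)) := by
          intro i
          rw [hBv j i]
          have e1 : |if i1 j = i then b1 j else 0| ≤ if i1 j = i then (1:ℝ) else 0 := by
            rcases (hb j).1 with h' | h' <;> split <;> simp [h']
          have e2 : |if i2 j = i then b2 j else 0| ≤ if i2 j = i then (1:ℝ) else 0 := by
            rcases (hb j).2.1 with h' | h' <;> split <;> simp [h']
          have e3 : |if i3 j = i then b3 j else 0| ≤ if i3 j = i then (1:ℝ) else 0 := by
            rcases (hb j).2.2 with h' | h' <;> split <;> simp [h']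
          calc |(if i1 j = i then b1 j else 0) + (if i2 j = i then b2 j else 0) +
              (if i3 j = i then b3 j else 0)|
              ≤ |if i1 j = i then b1 j else 0| + |if i2 j = i then b2 j else 0| +
                |if i3 j = i then b3 j else 0| := abs_add_three _ _ _
            _ ≤ _ := by rw [add_assoc]; exact add_le_add e1 (add_le_add e2 e3)
        calc ∑ i, |B j i| ≤ ∑ i, ((if i1 j = i then (1:ℝ) else 0) +
            ((if i2 j = i then (1:ℝ) else 0) + (if i3 j = i then (1:ℝ) else 0))) :=
              Finset.sum_le_sum fun i _ => hle i
          _ ≤ 3 := by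
              rw [Finset.sum_add_distrib, Finset.sum_add_distrib]
              simp only [Finset.sum_ite_eq, Finset.mem_univ, if_true]
              norm_num
      have hmul : |∑ i, B j i * φ i| ≤ 1/2 := by
        have h1 := norm_le_pi_norm (B.mulVec φ) j
        have h2 : B.mulVec φ j =
            ∑ i, B j i * φ i := rfl
        rw [h2, Real.norm_eq_abs] at h1
        exact h1.trans hψn
      have decomp : ∑ i, B j i * ((w (Sum.inl (Sum.inl i)) - X1 i) +
          (w (Sum.inl (Sum.inr (Sum.inl i))) - X2 i) +
          (w (Sum.inl (Sum.inr (Sum.inr i))) - X3 i)) =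
          (∑ i, B j i * (((w (Sum.inl (Sum.inl i)) - X1 i) +
            (w (Sum.inl (Sum.inr (Sum.inl i))) - X2 i) +
            (w (Sum.inl (Sum.inr (Sum.inr i))) - X3 i)) + 2*(ψ i) - 1)) +
          2 * ∑ i, B j i * φ i := by
        rw [Finset.mul_sum, ← Finset.sum_add_distrib]
        refine Finset.sum_congr rfl fun i _ => ?_
        simp only [hφ, Pi.sub_apply]
        ring
      have habs1 : |∑ i, B j i * (((w (Sum.inl (Sum.inl i)) - X1 i) +
          (w (Sum.inl (Sum.inr (Sum.inl i))) - X2 i) +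
          (w (Sum.inl (Sum.inr (Sum.inr i))) - X3 i)) + 2*(ψ i) - 1)| ≤ 3 := by
        calc |∑ i, B j i * (((w (Sum.inl (Sum.inl i)) - X1 i) +
            (w (Sum.inl (Sum.inr (Sum.inl i))) - X2 i) +
            (w (Sum.inl (Sum.inr (Sum.inr i))) - X3 i)) + 2*(ψ i) - 1)|
            ≤ ∑ i, |B j i * (((w (Sum.inl (Sum.inl i)) - X1 i) +
              (w (Sum.inl (Sum.inr (Sum.inl i))) - X2 i) +
              (w (Sum.inl (Sum.inr (Sum.inr i))) - X3 i)) + 2*(ψ i) - 1)| :=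
                Finset.abs_sum_le_sum_abs _ _
          _ ≤ ∑ i, |B j i| := by
              refine Finset.sum_le_sum fun i _ => ?_
              rw [abs_mul]
              have : |((w (Sum.inl (Sum.inl i)) - X1 i) +
                  (w (Sum.inl (Sum.inr (Sum.inl i))) - X2 i) +
                  (w (Sum.inl (Sum.inr (Sum.inr i))) - X3 i)) + 2*(ψ i) - 1| ≤ 1 := by
                rw [abs_le]
                constructor <;> [linarith [q7 i]; linarith [q8 i]]
              exact mul_le_of_le_one_right (abs_nonneg _) this
          _ ≤ 3 := hBabs
      rw [decomp]
      have h2' : |2 * ∑ i, B j i * φ i| ≤ 1 := by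
        rw [abs_mul, abs_two]; linarith [hmul]
      calc |(∑ i, B j i * (((w (Sum.inl (Sum.inl i)) - X1 i) +
            (w (Sum.inl (Sum.inr (Sum.inl i))) - X2 i) +
            (w (Sum.inl (Sum.inr (Sum.inr i))) - X3 i)) + 2*(ψ i) - 1)) +
            2 * ∑ i, B j i * φ i|
          ≤ |∑ i, B j i * (((w (Sum.inl (Sum.inl i)) - X1 i) +
            (w (Sum.inl (Sum.inr (Sum.inl i))) - X2 i) +
            (w (Sum.inl (Sum.inr (Sum.inr i))) - X3 i)) + 2*(ψ i) - 1)| +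
            |2 * ∑ i, B j i * φ i| := abs_add_le _ _
        _ ≤ 4 := by linarith
    rcases r with (j | (k | (k | k))) | (k | k)
    · -- clause row
      have e : (A'mat h B).mulVec (w - Sum.elim (Sum.elim X1 (Sum.elim X2 X3)) ψA)
          (Sum.inl (Sum.inl j)) =
          (1/3) * ∑ i, B j i * ((w (Sum.inl (Sum.inl i)) - X1 i) +
            (w (Sum.inl (Sum.inr (Sum.inl i))) - X2 i) +
            (w (Sum.inl (Sum.inr (Sum.inr i))) - X3 i)) := by
        simp only [Matrix.mulVec, dotProduct, Fintype.sum_sum_type, A'mat, Amat,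
          Matrix.of_apply, Sum.elim_inl, Sum.elim_inr, Pi.sub_apply, zero_mul,
          Finset.sum_const_zero, add_zero, id_eq]
        rw [Finset.mul_sum, ← Finset.sum_add_distrib, ← Finset.sum_add_distrib]
        exact Finset.sum_congr rfl fun i _ => by ring
      rw [e, abs_mul]
      have := hclause j
      rw [show |(1:ℝ)/3| = 1/3 by norm_num]
      linarith
    · -- row d1 + d2 - d3
      have e : (A'mat h B).mulVec (w - Sum.elim (Sum.elim X1 (Sum.elim X2 X3)) ψA)
          (Sum.inl (Sum.inr (Sum.inl k))) =
          (w (Sum.inl (Sum.inl k)) - X1 k) + (w (Sum.inl (Sum.inr (Sum.inl k))) - X2 k) -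
            (w (Sum.inl (Sum.inr (Sum.inr k))) - X3 k) := by
        simp only [Matrix.mulVec, dotProduct, Fintype.sum_sum_type, A'mat, Amat,
          Matrix.of_apply, Sum.elim_inl, Sum.elim_inr, Pi.sub_apply, zero_mul,
          Finset.sum_const_zero, add_zero, ite_mul, one_mul, neg_mul,
          Finset.sum_ite_eq, Finset.mem_univ, if_true]
        ring
      rw [e, abs_le]
      constructor
      · linarith [q5 k]
      · linarith [q6 k]
    · -- row d1 - d2 + d3
      have e : (A'mat h B).mulVec (w - Sum.elim (Sum.elim X1 (Sum.elim X2 X3)) ψA)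
          (Sum.inl (Sum.inr (Sum.inr (Sum.inl k)))) =
          (w (Sum.inl (Sum.inl k)) - X1 k) - (w (Sum.inl (Sum.inr (Sum.inl k))) - X2 k) +
            (w (Sum.inl (Sum.inr (Sum.inr k))) - X3 k) := by
        simp only [Matrix.mulVec, dotProduct, Fintype.sum_sum_type, A'mat, Amat,
          Matrix.of_apply, Sum.elim_inl, Sum.elim_inr, Pi.sub_apply, zero_mul,
          Finset.sum_const_zero, add_zero, ite_mul, one_mul, neg_mul,
          Finset.sum_ite_eq, Finset.mem_univ, if_true]
        ring
      rw [e, abs_le]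
      constructor
      · linarith [q3 k]
      · linarith [q4 k]
    · -- row -d1 + d2 + d3
      have e : (A'mat h B).mulVec (w - Sum.elim (Sum.elim X1 (Sum.elim X2 X3)) ψA)
          (Sum.inl (Sum.inr (Sum.inr (Sum.inr k)))) =
          -(w (Sum.inl (Sum.inl k)) - X1 k) + (w (Sum.inl (Sum.inr (Sum.inl k))) - X2 k) +
            (w (Sum.inl (Sum.inr (Sum.inr k))) - X3 k) := by
        simp only [Matrix.mulVec, dotProduct, Fintype.sum_sum_type, A'mat, Amat,
          Matrix.of_apply, Sum.elim_inl, Sum.elim_inr, Pi.sub_apply, zero_mul,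
          Finset.sum_const_zero, add_zero, ite_mul, one_mul, neg_mul,
          Finset.sum_ite_eq, Finset.mem_univ, if_true]
        ring
      rw [e, abs_le]
      constructor
      · linarith [q1 k]
      · linarith [q2 k]
    · -- coupling row
      have e : (A'mat h B).mulVec (w - Sum.elim (Sum.elim X1 (Sum.elim X2 X3)) ψA)
          (Sum.inr (Sum.inl k)) =
          (2/3) * ((w (Sum.inl (Sum.inl (Fin.castLE h k))) - X1 (Fin.castLE h k)) +
            (w (Sum.inl (Sum.inr (Sum.inl (Fin.castLE h k)))) - X2 (Fin.castLE h k)) +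
            (w (Sum.inl (Sum.inr (Sum.inr (Fin.castLE h k)))) - X3 (Fin.castLE h k))) -
            2 * (w (Sum.inr k) - ψA k) := by
        simp only [Matrix.mulVec, dotProduct, Fintype.sum_sum_type, A'mat,
          Matrix.of_apply, Sum.elim_inl, Sum.elim_inr, Pi.sub_apply, zero_mul,
          Finset.sum_const_zero, add_zero, ite_mul, one_mul, neg_mul,
          Finset.sum_ite_eq, Finset.mem_univ, if_true]
        ring
      rw [e]
      have hψk : ψ (Fin.castLE h k) = ψA k := hext k
      by_cases h' : (1:ℝ)/2 ≤ w (Sum.inr k)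
      · have hA : ψA k = 1 := by simp only [hψAdef]; rw [if_pos h']
        have h7 := q7 (Fin.castLE h k); have h8 := q8 (Fin.castLE h k)
        rw [hψk] at h7 h8
        rw [hA] at h7 h8 ⊢
        have hw4 := (hw (Sum.inr k)).2
        rw [abs_le]; constructor <;> linarith
      · have hA : ψA k = 0 := by simp only [hψAdef]; rw [if_neg h']
        have h7 := q7 (Fin.castLE h k); have h8 := q8 (Fin.castLE h k)
        rw [hψk] at h7 h8
        rw [hA] at h7 h8 ⊢
        have hw4 := (hw (Sum.inr k)).1
        push_neg at h'
        rw [abs_le]; constructor <;> linarith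
    · -- rounding row
      have e : (A'mat h B).mulVec (w - Sum.elim (Sum.elim X1 (Sum.elim X2 X3)) ψA)
          (Sum.inr (Sum.inr k)) = (8/3) * (w (Sum.inr k) - ψA k) := by
        simp only [Matrix.mulVec, dotProduct, Fintype.sum_sum_type, A'mat,
          Matrix.of_apply, Sum.elim_inl, Sum.elim_inr, Pi.sub_apply, zero_mul,
          Finset.sum_const_zero, add_zero, ite_mul, one_mul, neg_mul,
          Finset.sum_ite_eq, Finset.mem_univ, if_true, zero_add]
      rw [e]
      by_cases h' : (1:ℝ)/2 ≤ w (Sum.inr k)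
      · have hA : ψA k = 1 := by simp only [hψAdef]; rw [if_pos h']
        rw [hA]
        have hw4 := (hw (Sum.inr k)).2
        rw [abs_le]; constructor <;> linarith
      · have hA : ψA k = 0 := by simp only [hψAdef]; rw [if_neg h']
        rw [hA]
        have hw4 := (hw (Sum.inr k)).1
        push_neg at h'
        rw [abs_le]; constructor <;> linarith
end

section
/- Let B ∈ ℝ^{m×n} be a NAE3SAT clause matrix, let n' ≤ n, and let A' ∈ ℝ^{(m+3n+2n')×(3n+n')} be the block matrix whose first m+3n rows are [A | 0], where A has blocks [⅓B ⅓B ⅓B], [I_n I_n −I_n], [I_n −I_n I_n], [−I_n I_n I_n] from top to bottom; whose next n' rows are [⅔I_{n'} 0 | ⅔I_{n'} 0 | ⅔I_{n'} 0 | −2I_{n'}]; and whose last n' rows are [0_{n'×3n} | (8/3)I_{n'}]. If lindisc(A') < 3/2, then for every ψ_A ∈ {0,1}^{n'} there exists ψ ∈ {0,1}ⁿ with ψᵢ = (ψ_A)ᵢ for all i ∈ [n'] such that ψ NAE-satisfies B, i.e. ‖B((1/2)·1 − ψ)‖_∞ ≤ 1/2. -/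
set_option maxHeartbeats 1000000
set_option linter.unnecessarySeqFocus false

section aux

lemma mulVec_bound {I J : Type*} [Fintype I] [Fintype J] (A : Matrix I J ℝ)
    (v : J → ℝ) (hv : ∀ j, |v j| ≤ 1) :
    ‖A.mulVec v‖ ≤ ∑ i, ∑ j, |A i j| := by
  have hC : (0:ℝ) ≤ ∑ i, ∑ j, |A i j| :=
    Finset.sum_nonneg fun i _ => Finset.sum_nonneg fun j _ => abs_nonneg _
  rw [pi_norm_le_iff_of_nonneg hC]
  intro i
  have h1 : A.mulVec v i = ∑ j, A i j * v j := by
    simp [Matrix.mulVec, dotProduct]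
  rw [Real.norm_eq_abs, h1]
  calc |∑ j, A i j * v j| ≤ ∑ j, |A i j * v j| := Finset.abs_sum_le_sum_abs _ _
    _ ≤ ∑ j, |A i j| := Finset.sum_le_sum fun j _ => by
        rw [abs_mul]
        nlinarith [abs_nonneg (A i j), hv j, abs_nonneg (v j)]
    _ ≤ ∑ i, ∑ j, |A i j| := Finset.single_le_sum (f := fun i => ∑ j, |A i j|)
        (fun i _ => Finset.sum_nonneg fun j _ => abs_nonneg _) (Finset.mem_univ i)

lemma exists_rounding {I J : Type*} [Fintype I] [Fintype J] (A : Matrix I J ℝ)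
    (c : ℝ) (hc : lindisc A < c) (w : J → ℝ) (hw : ∀ j, w j ∈ Set.Icc (0:ℝ) 1) :
    ∃ x : J → ℝ, (∀ j, x j = 0 ∨ x j = 1) ∧ ‖A.mulVec (w - x)‖ < c := by
  set X := {x : J → ℝ // ∀ j, x j = 0 ∨ x j = 1}
  haveI : Nonempty X := ⟨⟨fun _ => 0, fun _ => Or.inl rfl⟩⟩
  haveI : Finite X := by
    apply Finite.of_injective (fun x : X => (fun j => x.1 j = 1 : J → Prop))
    rintro ⟨x, hx⟩ ⟨y, hy⟩ hxy
    ext j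
    have := congrFun hxy j
    rcases hx j with h1 | h1 <;> rcases hy j with h2 | h2 <;> simp_all
  have key : ∀ w' : {w : J → ℝ // ∀ j, w j ∈ Set.Icc (0:ℝ) 1},
      (⨅ x : X, ‖A.mulVec (w'.1 - x.1)‖) ≤ ∑ i, ∑ j, |A i j| := by
    intro w'
    have hbdd : BddBelow (Set.range fun x : X => ‖A.mulVec (w'.1 - x.1)‖) :=
      ⟨0, fun y hy => by obtain ⟨x, rfl⟩ := hy; positivity⟩
    have : (⨅ x : X, ‖A.mulVec (w'.1 - x.1)‖) ≤ ‖A.mulVec (w'.1 - (fun _ => 0))‖ :=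
      ciInf_le hbdd ⟨fun _ => 0, fun _ => Or.inl rfl⟩
    refine this.trans (mulVec_bound _ _ fun j => ?_)
    have := (w'.2 j).1; have := (w'.2 j).2
    simp only [Pi.sub_apply]
    rw [abs_le]; constructor <;> simp <;> linarith
  have hle : (⨅ x : X, ‖A.mulVec (w - x.1)‖) ≤ lindisc A := by
    have := le_ciSup (f := fun w' : {w : J → ℝ // ∀ j, w j ∈ Set.Icc (0:ℝ) 1} =>
      ⨅ x : X, ‖A.mulVec (w'.1 - x.1)‖) (c := ⟨w, hw⟩)
      ⟨∑ i, ∑ j, |A i j|, by rintro y ⟨w', rfl⟩; exact key w'⟩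
    exact this
  obtain ⟨x₀, hmin⟩ := Finite.exists_min (fun x : X => ‖A.mulVec (w - x.1)‖)
  have heq : ‖A.mulVec (w - x₀.1)‖ ≤ ⨅ x : X, ‖A.mulVec (w - x.1)‖ := le_ciInf hmin
  exact ⟨x₀.1, x₀.2, lt_of_le_of_lt (heq.trans hle) hc⟩

end aux

section rows
variable {m n n' : ℕ} (h : n' ≤ n) (B : Matrix (Fin m) (Fin n) ℝ)
  (v : (Fin n ⊕ Fin n ⊕ Fin n) ⊕ Fin n' → ℝ)

lemma row1 (j : Fin m) : (A'mat h B).mulVec v (Sum.inl (Sum.inl j)) =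
    (1/3) * ((∑ i, B j i * v (Sum.inl (Sum.inl i)))
      + (∑ i, B j i * v (Sum.inl (Sum.inr (Sum.inl i))))
      + (∑ i, B j i * v (Sum.inl (Sum.inr (Sum.inr i))))) := by
  simp [A'mat, Amat, Matrix.mulVec, dotProduct, Fintype.sum_sum_type,
    mul_comm]
  have e : ∀ (f : Fin n → ℝ), ∑ x, B j x * 3⁻¹ * f x = 3⁻¹ * ∑ x, B j x * f x := by
    intro f; rw [Finset.mul_sum]; exact Finset.sum_congr rfl fun i _ => by ring
  rw [e, e, e]; ring

lemma row2 (k : Fin n) : (A'mat h B).mulVec v (Sum.inl (Sum.inr (Sum.inl k))) =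
    v (Sum.inl (Sum.inl k)) + v (Sum.inl (Sum.inr (Sum.inl k)))
      - v (Sum.inl (Sum.inr (Sum.inr k))) := by
  simp [A'mat, Amat, Matrix.mulVec, dotProduct, Fintype.sum_sum_type,
    ite_mul, Finset.sum_ite_eq]
  try ring

lemma row3 (k : Fin n) : (A'mat h B).mulVec v (Sum.inl (Sum.inr (Sum.inr (Sum.inl k)))) =
    v (Sum.inl (Sum.inl k)) - v (Sum.inl (Sum.inr (Sum.inl k)))
      + v (Sum.inl (Sum.inr (Sum.inr k))) := by
  simp [A'mat, Amat, Matrix.mulVec, dotProduct, Fintype.sum_sum_type,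
    ite_mul, Finset.sum_ite_eq]
  try ring

lemma row4 (k : Fin n) : (A'mat h B).mulVec v (Sum.inl (Sum.inr (Sum.inr (Sum.inr k)))) =
    - v (Sum.inl (Sum.inl k)) + v (Sum.inl (Sum.inr (Sum.inl k)))
      + v (Sum.inl (Sum.inr (Sum.inr k))) := by
  simp [A'mat, Amat, Matrix.mulVec, dotProduct, Fintype.sum_sum_type,
    ite_mul, Finset.sum_ite_eq]
  try ring

lemma row5 (k : Fin n') : (A'mat h B).mulVec v (Sum.inr (Sum.inl k)) =
    (2/3) * (v (Sum.inl (Sum.inl (Fin.castLE h k))) + v (Sum.inl (Sum.inr (Sum.inl (Fin.castLE h k))))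
      + v (Sum.inl (Sum.inr (Sum.inr (Fin.castLE h k))))) - 2 * v (Sum.inr k) := by
  simp [A'mat, Matrix.mulVec, dotProduct, Fintype.sum_sum_type,
    ite_mul, Finset.sum_ite_eq]
  try ring

lemma row6 (k : Fin n') : (A'mat h B).mulVec v (Sum.inr (Sum.inr k)) =
    (8/3) * v (Sum.inr k) := by
  simp [A'mat, Matrix.mulVec, dotProduct, Fintype.sum_sum_type,
    ite_mul, Finset.sum_ite_eq]
  try ring

end rows

/-- Soundness of the `Π₂`-hardness reduction: if `lindisc(A') < 3/2`, then every assignment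
`ψ_A` to the first `n'` variables extends to a NAE-satisfying assignment of `B`. -/
theorem pi2_reduction_soundness {m n n' : ℕ} (h : n' ≤ n)
    (B : Matrix (Fin m) (Fin n) ℝ) (hB : IsNAEClauseMatrix B)
    (hlin : lindisc (A'mat h B) < 3 / 2) :
    ∀ ψA : Fin n' → ℝ, (∀ i, ψA i = 0 ∨ ψA i = 1) →
      ∃ ψ : Fin n → ℝ, (∀ i : Fin n', ψ (Fin.castLE h i) = ψA i) ∧ NAESatisfies B ψ := by
  intro ψA hψA
  obtain ⟨i1, i2, i3, b1, b2, b3, hbsgn, hBrow⟩ := hB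
  set w : (Fin n ⊕ Fin n ⊕ Fin n) ⊕ Fin n' → ℝ :=
    Sum.elim (fun _ => 1/2) (fun k => 1/4 + ψA k / 2) with hw_def
  have hw : ∀ j, w j ∈ Set.Icc (0:ℝ) 1 := by
    rintro (j | k)
    · constructor <;> simp [hw_def] <;> norm_num
    · rcases hψA k with h0 | h0 <;> constructor <;> simp [hw_def, h0] <;> norm_num
  obtain ⟨x, hx01, hxn⟩ := exists_rounding _ _ hlin w hw
  have hrow : ∀ r, |((A'mat h B).mulVec (w - x)) r| < 3/2 := by
    intro r
    calc |((A'mat h B).mulVec (w - x)) r| = ‖((A'mat h B).mulVec (w - x)) r‖ :=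
          (Real.norm_eq_abs _).symm
      _ ≤ ‖(A'mat h B).mulVec (w - x)‖ := norm_le_pi_norm _ r
      _ < 3/2 := hxn
  -- values of w - x on the three y-blocks
  have hv1 : ∀ i, (w - x) (Sum.inl (Sum.inl i)) = 1/2 - x (Sum.inl (Sum.inl i)) := by
    intro i; simp [hw_def]
  have hv2 : ∀ i, (w - x) (Sum.inl (Sum.inr (Sum.inl i)))
      = 1/2 - x (Sum.inl (Sum.inr (Sum.inl i))) := by
    intro i; simp [hw_def]
  have hv3 : ∀ i, (w - x) (Sum.inl (Sum.inr (Sum.inr i)))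
      = 1/2 - x (Sum.inl (Sum.inr (Sum.inr i))) := by
    intro i; simp [hw_def]
  have hvz : ∀ k : Fin n', (w - x) (Sum.inr k) = 1/4 + ψA k / 2 - x (Sum.inr k) := by
    intro k; simp [hw_def]
  -- the three copies agree
  have hcopy : ∀ i : Fin n, x (Sum.inl (Sum.inr (Sum.inl i))) = x (Sum.inl (Sum.inl i))
      ∧ x (Sum.inl (Sum.inr (Sum.inr i))) = x (Sum.inl (Sum.inl i)) := by
    intro i
    have h2 := hrow (Sum.inl (Sum.inr (Sum.inl i)))
    have h3 := hrow (Sum.inl (Sum.inr (Sum.inr (Sum.inl i))))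
    have h4 := hrow (Sum.inl (Sum.inr (Sum.inr (Sum.inr i))))
    rw [row2, hv1, hv2, hv3] at h2
    rw [row3, hv1, hv2, hv3] at h3
    rw [row4, hv1, hv2, hv3] at h4
    rcases hx01 (Sum.inl (Sum.inl i)) with e1 | e1 <;>
      rcases hx01 (Sum.inl (Sum.inr (Sum.inl i))) with e2 | e2 <;>
      rcases hx01 (Sum.inl (Sum.inr (Sum.inr i))) with e3 | e3 <;>
      rw [e1, e2, e3] at h2 h3 h4 <;>
      rw [abs_lt] at h2 h3 h4 <;>
      rw [e1, e2, e3] <;>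
      first
        | exact ⟨rfl, rfl⟩
        | (exfalso; linarith [h2.1, h2.2, h3.1, h3.2, h4.1, h4.2])
  set ψ : Fin n → ℝ := fun i => x (Sum.inl (Sum.inl i)) with hψ_def
  have hψ01 : ∀ i, ψ i = 0 ∨ ψ i = 1 := fun i => hx01 _
  -- agreement with ψA on the first n' coordinates
  have hagree : ∀ k : Fin n', ψ (Fin.castLE h k) = ψA k := by
    intro k
    have h6 := hrow (Sum.inr (Sum.inr k))
    have h5 := hrow (Sum.inr (Sum.inl k))
    rw [row6, hvz] at h6
    rw [row5, hv1, hv2, hv3, hvz, (hcopy _).1, (hcopy _).2] at h5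
    rcases hψA k with e0 | e0 <;>
      rcases hx01 (Sum.inr k) with e1 | e1 <;>
      rcases hx01 (Sum.inl (Sum.inl (Fin.castLE h k))) with e2 | e2 <;>
      rw [e0, e1] at h5 h6 <;>
      rw [e2] at h5 <;>
      rw [abs_lt] at h5 h6 <;>
      first
        | (exfalso; linarith [h5.1, h5.2, h6.1, h6.2])
        | simp [hψ_def, e2, e0]
  refine ⟨ψ, hagree, hψ01, ?_⟩
  -- the discrepancy bound on the clause rows
  rw [pi_norm_le_iff_of_nonneg (by norm_num : (0:ℝ) ≤ 1/2)]
  intro j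
  have h1 := hrow (Sum.inl (Sum.inl j))
  rw [row1] at h1
  have hsum : ∀ (f : (Fin n ⊕ Fin n ⊕ Fin n) ⊕ Fin n' → ℝ)
      (g : Fin n → (Fin n ⊕ Fin n ⊕ Fin n) ⊕ Fin n'),
      True := fun _ _ => trivial
  -- rewrite the three inner sums using hv1..hv3 and hcopy
  have e1 : (∑ i, B j i * (w - x) (Sum.inl (Sum.inl i))) = ∑ i, B j i * (1/2 - ψ i) :=
    Finset.sum_congr rfl fun i _ => by rw [hv1]
  have e2 : (∑ i, B j i * (w - x) (Sum.inl (Sum.inr (Sum.inl i)))) = ∑ i, B j i * (1/2 - ψ i) :=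
    Finset.sum_congr rfl fun i _ => by rw [hv2, hψ_def]; simp [(hcopy i).1]
  have e3 : (∑ i, B j i * (w - x) (Sum.inl (Sum.inr (Sum.inr i)))) = ∑ i, B j i * (1/2 - ψ i) :=
    Finset.sum_congr rfl fun i _ => by rw [hv3, hψ_def]; simp [(hcopy i).2]
  rw [e1, e2, e3] at h1
  have hval : B.mulVec ((fun _ => (1:ℝ)/2) - ψ) j = ∑ i, B j i * (1/2 - ψ i) := by
    simp [Matrix.mulVec, dotProduct]
  have hS : (∑ i, B j i * (1/2 - ψ i)) =
      b1 j * (1/2 - ψ (i1 j)) + b2 j * (1/2 - ψ (i2 j)) + b3 j * (1/2 - ψ (i3 j)) := by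
    have : ∀ i, B j i * (1/2 - ψ i) =
        (if i1 j = i then b1 j * (1/2 - ψ i) else 0)
        + (if i2 j = i then b2 j * (1/2 - ψ i) else 0)
        + (if i3 j = i then b3 j * (1/2 - ψ i) else 0) := by
      intro i
      rw [hBrow j i]
      by_cases h1' : i1 j = i <;> by_cases h2' : i2 j = i <;> by_cases h3' : i3 j = i <;>
        simp [h1', h2', h3'] <;> ring
    rw [Finset.sum_congr rfl fun i _ => this i]
    simp [Finset.sum_add_distrib, Finset.sum_ite_eq]
  rw [Real.norm_eq_abs, hval, hS]
  rw [hS] at h1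
  have t1 : b1 j * (1/2 - ψ (i1 j)) = 1/2 ∨ b1 j * (1/2 - ψ (i1 j)) = -(1/2) := by
    rcases (hbsgn j).1 with e | e <;> rcases hψ01 (i1 j) with f | f <;> rw [e, f] <;> norm_num
  have t2 : b2 j * (1/2 - ψ (i2 j)) = 1/2 ∨ b2 j * (1/2 - ψ (i2 j)) = -(1/2) := by
    rcases (hbsgn j).2.1 with e | e <;> rcases hψ01 (i2 j) with f | f <;> rw [e, f] <;> norm_num
  have t3 : b3 j * (1/2 - ψ (i3 j)) = 1/2 ∨ b3 j * (1/2 - ψ (i3 j)) = -(1/2) := by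
    rcases (hbsgn j).2.2 with e | e <;> rcases hψ01 (i3 j) with f | f <;> rw [e, f] <;> norm_num
  rw [abs_lt] at h1
  rw [abs_le]
  rcases t1 with t1 | t1 <;> rcases t2 with t2 | t2 <;> rcases t3 with t3 | t3 <;>
    rw [t1, t2, t3] at h1 ⊢ <;> constructor <;> linarith [h1.1, h1.2]
end
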